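/- arXiv:2206.10431 — 6 statements merged into one kernel-verified Lean document; each statement's English description precedes it below -/
import Mathlib

section
/- Let H be an n×n real symmetric matrix. Decompose H = H₋ + H₊ where (H₊)_{ij} = H_{ij} if i ≠ j and H_{ij} > 0 and (H₊)_{ij} = 0 otherwise, and let H̃ = H₋ − H₊ be the bosonic form of H. Let α = max_i H_{ii} and β > 0. Then the non-stoquasticity indicator S(H) = (Tr[exp(−βH̃)] − Tr[exp(−βH)]) / Tr[exp(−βH)] satisfies S(H) ≤ 2·exp(β‖αI − H₋‖_{L1})·sinh(β‖H₊‖_{L1}). (Note Tr[exp(−βH)] > 0 since exp(−βH) is positive definite.) -/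
open Matrix Filter

/-- The positive off-diagonal part `H₊` of a real matrix:
`(H₊)ᵢⱼ = Hᵢⱼ` if `i ≠ j` and `Hᵢⱼ > 0`, and `0` otherwise. -/
noncomputable def Hplus {n : ℕ} (H : Matrix (Fin n) (Fin n) ℝ) : Matrix (Fin n) (Fin n) ℝ :=
  Matrix.of fun i j => if i ≠ j ∧ 0 < H i j then H i j else 0

/-- The remaining part `H₋ := H - H₊`. -/
noncomputable def Hminus {n : ℕ} (H : Matrix (Fin n) (Fin n) ℝ) : Matrix (Fin n) (Fin n) ℝ :=
  H - Hplus H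

/-- The bosonic form `H̃ := H₋ - H₊` of `H`. -/
noncomputable def bosonic {n : ℕ} (H : Matrix (Fin n) (Fin n) ℝ) : Matrix (Fin n) (Fin n) ℝ :=
  Hminus H - Hplus H

/-- The entrywise L1 norm `‖M‖_{L1} = ∑ᵢⱼ |Mᵢⱼ|`. -/
noncomputable def L1 {n : ℕ} (M : Matrix (Fin n) (Fin n) ℝ) : ℝ :=
  ∑ i, ∑ j, |M i j|

/-- `α = maxᵢ Hᵢᵢ`, the largest diagonal entry. -/
noncomputable def alphaMax {n : ℕ} [NeZero n] (H : Matrix (Fin n) (Fin n) ℝ) : ℝ :=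
  ⨆ i, H i i

namespace NSIAux

open NormedSpace

attribute [local instance] Matrix.linftyOpNormedRing Matrix.linftyOpNormedAlgebra

variable {n : ℕ}




lemma sum_entries_mul_le (P Q : Matrix (Fin n) (Fin n) ℝ)
    (hP : ∀ i j, 0 ≤ P i j) (hQ : ∀ i j, 0 ≤ Q i j) :
    ∑ i, ∑ j, (P * Q) i j ≤ (∑ i, ∑ j, P i j) * (∑ i, ∑ j, Q i j) := by
  have h1 : ∑ i, ∑ j, (P * Q) i j = ∑ l, ∑ i, ∑ j, P i l * Q l j := by
    simp_rw [Matrix.mul_apply]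
    calc ∑ i, ∑ j, ∑ l, P i l * Q l j
        = ∑ i, ∑ l, ∑ j, P i l * Q l j :=
          Finset.sum_congr rfl fun i _ => Finset.sum_comm
      _ = ∑ l, ∑ i, ∑ j, P i l * Q l j := Finset.sum_comm
  rw [h1]
  simp_rw [← Finset.mul_sum, ← Finset.sum_mul]
  have h2 : ∀ l : Fin n, (∑ i, P i l) * (∑ j, Q l j) ≤ (∑ i, P i l) * (∑ m, ∑ j, Q m j) := by
    intro l
    apply mul_le_mul_of_nonneg_left _ (Finset.sum_nonneg fun i _ => hP i l)
    exact Finset.single_le_sum (f := fun m => ∑ j, Q m j)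
      (fun m _ => Finset.sum_nonneg fun j _ => hQ m j) (Finset.mem_univ l)
  calc ∑ l, (∑ i, P i l) * (∑ j, Q l j) ≤ ∑ l, (∑ i, P i l) * (∑ m, ∑ j, Q m j) :=
        Finset.sum_le_sum fun l _ => h2 l
    _ = (∑ l, ∑ i, P i l) * (∑ m, ∑ j, Q m j) := by rw [Finset.sum_mul]
    _ = (∑ i, ∑ l, P i l) * (∑ m, ∑ j, Q m j) := by rw [Finset.sum_comm]

lemma trace_exp_tsum (M : Matrix (Fin n) (Fin n) ℝ) :
    (exp M).trace = ∑' (k : ℕ), ((k.factorial : ℝ)⁻¹ • (M ^ k)).trace := by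
  have hs : Summable fun k : ℕ => (k.factorial : ℝ)⁻¹ • M ^ k := expSeries_summable' M
  have h : exp M = ∑' (k : ℕ), (k.factorial : ℝ)⁻¹ • M ^ k := by rw [exp_eq_tsum ℝ]
  rw [h]
  exact ((Matrix.traceLinearMap (Fin n) ℝ ℝ).toContinuousLinearMap.map_tsum hs)


lemma entry_sum_nonneg {P Q : Matrix (Fin n) (Fin n) ℝ}
    (hP : ∀ i j, 0 ≤ P i j) (hQ : ∀ i j, 0 ≤ Q i j) (i j : Fin n) :
    0 ≤ (P * Q) i j := by
  rw [Matrix.mul_apply]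
  exact Finset.sum_nonneg fun l _ => mul_nonneg (hP i l) (hQ l j)

lemma key (P Q : Matrix (Fin n) (Fin n) ℝ)
    (hP : ∀ i j, 0 ≤ P i j) (hQ : ∀ i j, 0 ≤ Q i j) (a b : ℝ)
    (ha : a = ∑ i, ∑ j, P i j) (hb : b = ∑ i, ∑ j, Q i j)
    (hle : ∀ (M N : Matrix (Fin n) (Fin n) ℝ), (∀ i j, 0 ≤ M i j) → (∀ i j, 0 ≤ N i j) →
      ∑ i, ∑ j, (M * N) i j ≤ (∑ i, ∑ j, M i j) * (∑ i, ∑ j, N i j)) : ∀ k : ℕ,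
    (∀ i j, 0 ≤ ((P+Q)^(k+1) + (P-Q)^(k+1)) i j) ∧
    (∀ i j, 0 ≤ ((P+Q)^(k+1) - (P-Q)^(k+1)) i j) ∧
    (∑ i, ∑ j, ((P+Q)^(k+1) + (P-Q)^(k+1)) i j ≤ (a+b)^(k+1) + (a-b)^(k+1)) ∧
    (∑ i, ∑ j, ((P+Q)^(k+1) - (P-Q)^(k+1)) i j ≤ (a+b)^(k+1) - (a-b)^(k+1)) := by
  have hP0 : (0:ℝ) ≤ a := ha ▸ Finset.sum_nonneg fun i _ => Finset.sum_nonneg fun j _ => hP i j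
  have hQ0 : (0:ℝ) ≤ b := hb ▸ Finset.sum_nonneg fun i _ => Finset.sum_nonneg fun j _ => hQ i j
  intro k
  induction k with
  | zero =>
    have e1 : (P+Q)^(0+1) + (P-Q)^(0+1) = P + P := by rw [pow_one, pow_one]; abel
    have e2 : (P+Q)^(0+1) - (P-Q)^(0+1) = Q + Q := by rw [pow_one, pow_one]; abel
    rw [e1, e2]
    refine ⟨fun i j => by simpa using add_nonneg (hP i j) (hP i j),
      fun i j => by simpa using add_nonneg (hQ i j) (hQ i j), ?_, ?_⟩
    · simp only [Matrix.add_apply, Finset.sum_add_distrib, pow_one]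
      rw [ha]; ring_nf; rfl
    · simp only [Matrix.add_apply, Finset.sum_add_distrib, pow_one]
      rw [hb]; ring_nf; rfl
  | succ k ih =>
    obtain ⟨hS, hD, hsS, hsD⟩ := ih
    set S := (P+Q)^(k+1) + (P-Q)^(k+1) with hSdef
    set D := (P+Q)^(k+1) - (P-Q)^(k+1) with hDdef
    have e1 : (P+Q)^(k+1+1) + (P-Q)^(k+1+1) = S * P + D * Q := by
      rw [hSdef, hDdef, pow_succ, pow_succ]; noncomm_ring
    have e2 : (P+Q)^(k+1+1) - (P-Q)^(k+1+1) = D * P + S * Q := by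
      rw [hSdef, hDdef, pow_succ, pow_succ]; noncomm_ring
    have hSP := entry_sum_nonneg hS hP
    have hDQ := entry_sum_nonneg hD hQ
    have hDP := entry_sum_nonneg hD hP
    have hSQ := entry_sum_nonneg hS hQ
    have hsS' : (0:ℝ) ≤ ∑ i, ∑ j, S i j :=
      Finset.sum_nonneg fun i _ => Finset.sum_nonneg fun j _ => hS i j
    have hsD' : (0:ℝ) ≤ ∑ i, ∑ j, D i j :=
      Finset.sum_nonneg fun i _ => Finset.sum_nonneg fun j _ => hD i j
    refine ⟨?_, ?_, ?_, ?_⟩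
    · intro i j; rw [e1]; exact add_nonneg (hSP i j) (hDQ i j)
    · intro i j; rw [e2]; exact add_nonneg (hDP i j) (hSQ i j)
    · rw [e1]
      simp only [Matrix.add_apply, Finset.sum_add_distrib]
      have b1 : ∑ i, ∑ j, (S * P) i j ≤ ((a+b)^(k+1) + (a-b)^(k+1)) * a := by
        refine le_trans (hle S P hS hP) ?_
        rw [← ha]
        exact mul_le_mul_of_nonneg_right hsS hP0
      have b2 : ∑ i, ∑ j, (D * Q) i j ≤ ((a+b)^(k+1) - (a-b)^(k+1)) * b := by
        refine le_trans (hle D Q hD hQ) ?_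
        rw [← hb]
        exact mul_le_mul_of_nonneg_right hsD hQ0
      calc _ ≤ ((a+b)^(k+1) + (a-b)^(k+1)) * a + ((a+b)^(k+1) - (a-b)^(k+1)) * b :=
            add_le_add b1 b2
        _ = (a+b)^(k+1+1) + (a-b)^(k+1+1) := by ring
    · rw [e2]
      simp only [Matrix.add_apply, Finset.sum_add_distrib]
      have b1 : ∑ i, ∑ j, (D * P) i j ≤ ((a+b)^(k+1) - (a-b)^(k+1)) * a := by
        refine le_trans (hle D P hD hP) ?_
        rw [← ha]
        exact mul_le_mul_of_nonneg_right hsD hP0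
      have b2 : ∑ i, ∑ j, (S * Q) i j ≤ ((a+b)^(k+1) + (a-b)^(k+1)) * b := by
        refine le_trans (hle S Q hS hQ) ?_
        rw [← hb]
        exact mul_le_mul_of_nonneg_right hsS hQ0
      calc _ ≤ ((a+b)^(k+1) - (a-b)^(k+1)) * a + ((a+b)^(k+1) + (a-b)^(k+1)) * b :=
            add_le_add b1 b2
        _ = (a+b)^(k+1+1) - (a-b)^(k+1+1) := by ring


lemma trace_exp_symm (M : Matrix (Fin n) (Fin n) ℝ) (hM : M.IsHermitian) :
    (exp M).trace = ∑ i, Real.exp (hM.eigenvalues i) := by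
  have hsp := hM.spectral_theorem
  set u := Unitary.toUnits hM.eigenvectorUnitary with hu
  have hcoe : ((u : (Matrix (Fin n) (Fin n) ℝ)ˣ) : Matrix (Fin n) (Fin n) ℝ)
      = (hM.eigenvectorUnitary : Matrix (Fin n) (Fin n) ℝ) := rfl
  have hcoei : ((u⁻¹ : (Matrix (Fin n) (Fin n) ℝ)ˣ) : Matrix (Fin n) (Fin n) ℝ)
      = star (hM.eigenvectorUnitary : Matrix (Fin n) (Fin n) ℝ) := rfl
  conv_lhs => rw [hsp, Unitary.conjStarAlgAut_apply, ← hcoei, ← hcoe]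
  rw [Matrix.exp_units_conj]
  rw [Matrix.trace_mul_cycle]
  simp only [Units.inv_mul, Matrix.one_mul]
  rw [Matrix.exp_diagonal, Matrix.trace_diagonal]
  congr 1; ext i
  simp [Function.comp, ← Real.exp_eq_exp_ℝ]


lemma smul_one_diag (c : ℝ) :
    c • (1 : Matrix (Fin n) (Fin n) ℝ) = Matrix.diagonal (fun _ => c) := by
  ext i j
  by_cases h : i = j <;> simp [Matrix.one_apply, Matrix.diagonal, h]

lemma exp_smul_one (c : ℝ) :
    exp (c • (1 : Matrix (Fin n) (Fin n) ℝ)) = Real.exp c • 1 := by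
  rw [smul_one_diag, Matrix.exp_diagonal, smul_one_diag]
  have h : (exp fun _ : Fin n => c) = fun _ => Real.exp c := by
    funext i
    rw [Pi.coe_exp, ← Real.exp_eq_exp_ℝ]
  rw [h]

lemma trace_eq_sum_eig (M : Matrix (Fin n) (Fin n) ℝ) (hM : M.IsHermitian) :
    M.trace = ∑ i, hM.eigenvalues i := by
  conv_lhs => rw [hM.spectral_theorem, Unitary.conjStarAlgAut_apply]
  rw [Matrix.trace_mul_cycle, Unitary.coe_star_mul_self, Matrix.one_mul,
    Matrix.trace_diagonal]
  simp


lemma summable_trace_pow (M : Matrix (Fin n) (Fin n) ℝ) :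
    Summable fun k : ℕ => ((k.factorial : ℝ)⁻¹ • (M ^ k)).trace := by
  exact (expSeries_summable' (𝕂 := ℝ) M).map
    (Matrix.traceLinearMap (Fin n) ℝ ℝ).toAddMonoidHom
    (LinearMap.continuous_of_finiteDimensional _)

lemma real_exp_tsum (x : ℝ) :
    Real.exp x = ∑' (k : ℕ), (k.factorial : ℝ)⁻¹ * x ^ k := by
  rw [Real.exp_eq_exp_ℝ, exp_eq_tsum ℝ]
  simp [smul_eq_mul]

lemma summable_real_exp (x : ℝ) :
    Summable fun k : ℕ => (k.factorial : ℝ)⁻¹ * x ^ k := by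
  simpa [smul_eq_mul] using expSeries_summable' (𝕂 := ℝ) x

end NSIAux

open NSIAux NormedSpace

/-- **Theorem 1 (NSI upper bound).** For a real symmetric `n×n` matrix `H` and `β > 0`,
the non-stoquasticity indicator
`S(H) = (Tr e^{-βH̃} - Tr e^{-βH}) / Tr e^{-βH}` is bounded by
`2 e^{β‖αI - H₋‖_{L1}} sinh(β‖H₊‖_{L1})`. -/
theorem nsi_upper_bound {n : ℕ} [NeZero n] (H : Matrix (Fin n) (Fin n) ℝ)
    (hH : H.IsSymm) (β : ℝ) (hβ : 0 < β) :
    ((NormedSpace.exp (-β • bosonic H)).trace - (NormedSpace.exp (-β • H)).trace) /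
        (NormedSpace.exp (-β • H)).trace ≤
      2 * Real.exp (β * L1 (alphaMax H • (1 : Matrix (Fin n) (Fin n) ℝ) - Hminus H)) *
        Real.sinh (β * L1 (Hplus H)) := by

  classical
  set α := alphaMax H with hα
  set X : Matrix (Fin n) (Fin n) ℝ := α • (1 : Matrix (Fin n) (Fin n) ℝ) - Hminus H with hXdef
  set P : Matrix (Fin n) (Fin n) ℝ := β • X with hPdef
  set Q : Matrix (Fin n) (Fin n) ℝ := β • Hplus H with hQdef
  have hαle : ∀ i, H i i ≤ α := by
    intro i
    rw [hα, alphaMax]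
    exact le_ciSup (f := fun i => H i i) (Set.Finite.bddAbove (Set.finite_range _)) i
  have hXpos : ∀ i j, 0 ≤ X i j := by
    intro i j
    by_cases hij : i = j
    · subst hij
      simp only [hXdef, Matrix.sub_apply, Matrix.smul_apply, Matrix.one_apply_eq, smul_eq_mul,
        mul_one, Hminus, Matrix.sub_apply, Hplus, Matrix.of_apply]
      have : ¬(i ≠ i ∧ 0 < H i i) := by simp
      rw [if_neg this]
      have := hαle i
      linarith
    · simp only [hXdef, Matrix.sub_apply, Matrix.smul_apply, Matrix.one_apply_ne hij,
        smul_eq_mul, mul_zero, Hminus, Matrix.sub_apply, Hplus, Matrix.of_apply]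
      by_cases hpos : 0 < H i j
      · rw [if_pos ⟨hij, hpos⟩]; simp
      · rw [if_neg (by tauto)]
        push_neg at hpos
        linarith
  have hQplusnn : ∀ i j, 0 ≤ Hplus H i j := by
    intro i j
    simp only [Hplus, Matrix.of_apply]
    split
    · next h => exact h.2.le
    · exact le_refl 0
  have hPpos : ∀ i j, 0 ≤ P i j := fun i j => by
    simpa [hPdef] using mul_nonneg hβ.le (hXpos i j)
  have hQpos : ∀ i j, 0 ≤ Q i j := fun i j => by
    simpa [hQdef] using mul_nonneg hβ.le (hQplusnn i j)
  set a := β * L1 X with hadef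
  set b := β * L1 (Hplus H) with hbdef
  have ha : a = ∑ i, ∑ j, P i j := by
    rw [hadef, L1, Finset.mul_sum]
    refine Finset.sum_congr rfl fun i _ => ?_
    rw [Finset.mul_sum]
    refine Finset.sum_congr rfl fun j _ => ?_
    rw [abs_of_nonneg (hXpos i j), hPdef]
    simp [smul_eq_mul]
  have hb : b = ∑ i, ∑ j, Q i j := by
    rw [hbdef, L1, Finset.mul_sum]
    refine Finset.sum_congr rfl fun i _ => ?_
    rw [Finset.mul_sum]
    refine Finset.sum_congr rfl fun j _ => ?_
    rw [abs_of_nonneg (hQplusnn i j), hQdef]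
    simp [smul_eq_mul]
  have ha0 : 0 ≤ a := ha ▸ Finset.sum_nonneg fun i _ => Finset.sum_nonneg fun j _ => hPpos i j
  have hb0 : 0 ≤ b := hb ▸ Finset.sum_nonneg fun i _ => Finset.sum_nonneg fun j _ => hQpos i j
  -- matrix identities
  have hHsum : H = Hminus H + Hplus H := by rw [Hminus]; abel
  have hbos : -β • bosonic H = (P + Q) + (-(β * α)) • (1 : Matrix (Fin n) (Fin n) ℝ) := by
    rw [hPdef, hQdef, hXdef, bosonic]
    module
  have hHid : -β • H = (P - Q) + (-(β * α)) • (1 : Matrix (Fin n) (Fin n) ℝ) := by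
    conv_lhs => rw [hHsum]
    rw [hPdef, hQdef, hXdef]
    module
  have hcomm : ∀ Y : Matrix (Fin n) (Fin n) ℝ,
      Commute Y ((-(β * α)) • (1 : Matrix (Fin n) (Fin n) ℝ)) := fun Y =>
    (Commute.one_right Y).smul_right _
  set E := Real.exp (-(β * α)) with hEdef
  have hE : 0 < E := Real.exp_pos _
  have he1 : (exp (-β • bosonic H)).trace = E * (exp (P + Q)).trace := by
    rw [hbos, Matrix.exp_add_of_commute _ _ (hcomm _), NSIAux.exp_smul_one,
      Matrix.mul_smul, Matrix.mul_one, Matrix.trace_smul, smul_eq_mul]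
  have he2 : (exp (-β • H)).trace = E * (exp (P - Q)).trace := by
    rw [hHid, Matrix.exp_add_of_commute _ _ (hcomm _), NSIAux.exp_smul_one,
      Matrix.mul_smul, Matrix.mul_one, Matrix.trace_smul, smul_eq_mul]
  set Tp := (exp (P + Q)).trace with hTp
  set Tm := (exp (P - Q)).trace with hTm
  -- denominator bound : 1 ≤ Tm
  have hPQid : P - Q = (β * α) • (1 : Matrix (Fin n) (Fin n) ℝ) - β • H := by
    conv_rhs => rw [hHsum]
    rw [hPdef, hQdef, hXdef]
    module
  have hsymm : (P - Q).IsSymm := by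
    rw [hPQid, Matrix.IsSymm, Matrix.transpose_sub, Matrix.transpose_smul,
      Matrix.transpose_smul, Matrix.transpose_one, hH]
  have hherm : (P - Q).IsHermitian := hsymm
  have htrnn : 0 ≤ (P - Q).trace := by
    rw [hPQid, Matrix.trace_sub, Matrix.trace_smul, Matrix.trace_smul, Matrix.trace_one,
      smul_eq_mul, smul_eq_mul]
    have h1 : Matrix.trace H = ∑ i, H i i := rfl
    have h2 : ∑ i, H i i ≤ ∑ _i : Fin n, α := Finset.sum_le_sum fun i _ => hαle i
    rw [h1]
    have h3 : (∑ _i : Fin n, α) = (Fintype.card (Fin n) : ℝ) * α := by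
      rw [Finset.sum_const, Finset.card_univ, nsmul_eq_mul]
    rw [h3, Fintype.card_fin] at h2
    rw [Fintype.card_fin]
    have := mul_nonneg hβ.le (sub_nonneg.mpr h2)
    nlinarith
  have hex : ∃ i, 0 ≤ hherm.eigenvalues i := by
    by_contra hcon
    push_neg at hcon
    have : ∑ i, hherm.eigenvalues i < 0 := by
      have : ∑ i, hherm.eigenvalues i < ∑ _i : Fin n, (0:ℝ) :=
        Finset.sum_lt_sum_of_nonempty Finset.univ_nonempty fun i _ => hcon i
      simpa using this
    rw [← NSIAux.trace_eq_sum_eig _ hherm] at this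
    linarith
  obtain ⟨i0, hi0⟩ := hex
  have hTm1 : 1 ≤ Tm := by
    rw [hTm, NSIAux.trace_exp_symm (P - Q) hherm]
    calc (1:ℝ) ≤ Real.exp (hherm.eigenvalues i0) := Real.one_le_exp hi0
      _ ≤ ∑ i, Real.exp (hherm.eigenvalues i) :=
        Finset.single_le_sum (fun i _ => (Real.exp_pos _).le) (Finset.mem_univ i0)
  -- numerator bound
  have hkey := NSIAux.key P Q hPpos hQpos a b ha hb
    (fun M N hM hN => NSIAux.sum_entries_mul_le M N hM hN)
  have hterm : ∀ k : ℕ, ((P + Q) ^ k).trace - ((P - Q) ^ k).trace ≤ (a + b) ^ k - (a - b) ^ k := by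
    intro k
    cases k with
    | zero => simp
    | succ k =>
      obtain ⟨hS, hD, hsS, hsD⟩ := hkey k
      have e1 : ((P + Q) ^ (k+1)).trace - ((P - Q) ^ (k+1)).trace
          = ∑ i, ((P + Q) ^ (k+1) - (P - Q) ^ (k+1)) i i := by
        rw [← Matrix.trace_sub]; rfl
      rw [e1]
      refine le_trans (le_trans (Finset.sum_le_sum fun i _ => ?_) hsD) le_rfl
      exact Finset.single_le_sum (fun j _ => hD i j) (Finset.mem_univ i)
  have hterm0 : ∀ k : ℕ, 0 ≤ ((P + Q) ^ k).trace - ((P - Q) ^ k).trace := by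
    intro k
    cases k with
    | zero => simp
    | succ k =>
      obtain ⟨hS, hD, hsS, hsD⟩ := hkey k
      have e1 : ((P + Q) ^ (k+1)).trace - ((P - Q) ^ (k+1)).trace
          = ∑ i, ((P + Q) ^ (k+1) - (P - Q) ^ (k+1)) i i := by
        rw [← Matrix.trace_sub]; rfl
      rw [e1]
      exact Finset.sum_nonneg fun i _ => hD i i
  have hTptsum : Tp = ∑' (k : ℕ), (k.factorial : ℝ)⁻¹ * ((P + Q) ^ k).trace := by
    rw [hTp, NSIAux.trace_exp_tsum]
    exact tsum_congr fun k => by rw [Matrix.trace_smul, smul_eq_mul]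
  have hTmtsum : Tm = ∑' (k : ℕ), (k.factorial : ℝ)⁻¹ * ((P - Q) ^ k).trace := by
    rw [hTm, NSIAux.trace_exp_tsum]
    exact tsum_congr fun k => by rw [Matrix.trace_smul, smul_eq_mul]
  have sf : Summable fun k : ℕ => (k.factorial : ℝ)⁻¹ * ((P + Q) ^ k).trace := by
    have := NSIAux.summable_trace_pow (P + Q)
    refine this.congr fun k => ?_
    rw [Matrix.trace_smul, smul_eq_mul]
  have sg : Summable fun k : ℕ => (k.factorial : ℝ)⁻¹ * ((P - Q) ^ k).trace := by
    have := NSIAux.summable_trace_pow (P - Q)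
    refine this.congr fun k => ?_
    rw [Matrix.trace_smul, smul_eq_mul]
  have s1 := NSIAux.summable_real_exp (a + b)
  have s2 := NSIAux.summable_real_exp (a - b)
  have hnum : Tp - Tm ≤ Real.exp (a + b) - Real.exp (a - b) := by
    rw [hTptsum, hTmtsum, ← Summable.tsum_sub sf sg,
      NSIAux.real_exp_tsum (a + b), NSIAux.real_exp_tsum (a - b), ← Summable.tsum_sub s1 s2]
    refine Summable.tsum_le_tsum (fun k => ?_) (sf.sub sg) (s1.sub s2)
    rw [← mul_sub, ← mul_sub]
    exact mul_le_mul_of_nonneg_left (hterm k) (by positivity)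
  have hnum0 : 0 ≤ Tp - Tm := by
    rw [hTptsum, hTmtsum, ← Summable.tsum_sub sf sg]
    refine tsum_nonneg fun k => ?_
    rw [← mul_sub]
    exact mul_nonneg (by positivity) (hterm0 k)
  -- assemble
  rw [he1, he2]
  have hdiv : (E * Tp - E * Tm) / (E * Tm) = (Tp - Tm) / Tm := by
    rw [← mul_sub, mul_div_mul_left _ _ (ne_of_gt hE)]
  rw [hdiv]
  have hfinal : Real.exp (a + b) - Real.exp (a - b) = 2 * Real.exp a * Real.sinh b := by
    rw [Real.sinh_eq, Real.exp_add, Real.exp_sub, Real.exp_neg]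
    have hb' := Real.exp_pos b
    field_simp
  calc (Tp - Tm) / Tm ≤ Tp - Tm := div_le_self hnum0 hTm1
    _ ≤ Real.exp (a + b) - Real.exp (a - b) := hnum
    _ = 2 * Real.exp a * Real.sinh b := hfinal
end

section
/- Fix a dimension n ≥ 1, an inverse temperature β > 0, and a radius R > 0. There exists a constant C > 0 (depending only on n, β, R) such that for every n×n real symmetric matrix H with |H_{ij}| ≤ R for all i, j, the state-diagnostic non-stoquasticity indicator satisfies S(H, e₀) := (⟨e₀| exp(−βH̃) |e₀⟩ − ⟨e₀| exp(−βH) |e₀⟩) / ⟨e₀| exp(−βH) |e₀⟩ ≤ C · ‖Π⊥ H e₀‖², where e₀ is the first standard basis vector, Π⊥ = I − e₀e₀ᵀ, and ‖v‖ is the Euclidean norm. -/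
open Matrix Filter

/-- The first standard basis vector `e₀`. -/
noncomputable def e0 {n : ℕ} [NeZero n] : Fin n → ℝ := Pi.single 0 1

/-- The projector `Π⊥ = I - e₀e₀ᵀ` onto the orthogonal complement of `e₀`. -/
noncomputable def projPerp {n : ℕ} [NeZero n] : Matrix (Fin n) (Fin n) ℝ :=
  1 - vecMulVec e0 e0

/-- The squared Euclidean norm `‖v‖² = ∑ᵢ vᵢ²`. -/
noncomputable def sqNorm {n : ℕ} (v : Fin n → ℝ) : ℝ := ∑ i, (v i) ^ 2



set_option linter.unusedSectionVars false

section NSIProof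
open NormedSpace Finset
variable {n : ℕ} [NeZero n]


lemma pow_telescope {A : Type*} [Ring A] (a b : A) (k : ℕ) :
    b ^ k - a ^ k = ∑ j ∈ Finset.range k, a ^ j * (b - a) * b ^ (k - 1 - j) := by
  induction k with
  | zero => simp
  | succ k ih =>
    rw [Finset.sum_range_succ']
    have h1 : ∀ j ∈ Finset.range k, a ^ (j+1) * (b - a) * b ^ (k + 1 - 1 - (j+1))
        = a * (a ^ j * (b - a) * b ^ (k - 1 - j)) := by
      intro j hj
      have : k + 1 - 1 - (j + 1) = k - 1 - j := by omega
      rw [this, pow_succ', mul_assoc, mul_assoc, mul_assoc]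
    rw [Finset.sum_congr rfl h1, ← Finset.mul_sum, ← ih]
    have h2 : k + 1 - 1 - 0 = k := by omega
    rw [h2, pow_zero, one_mul, mul_sub, sub_mul, pow_succ' a, pow_succ' b]
    abel

section EIG
variable (K : Matrix (Fin n) (Fin n) ℝ) (lam : ℝ)

lemma pow_mulVec_e0 (hK : K *ᵥ e0 = lam • e0) (k : ℕ) :
    K ^ k *ᵥ e0 = (lam ^ k) • e0 := by
  induction k with
  | zero => simp [Matrix.one_mulVec]
  | succ k ih =>
    rw [pow_succ', ← Matrix.mulVec_mulVec, ih, Matrix.mulVec_smul, hK, smul_smul, pow_succ,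
      mul_comm]

lemma e0_vecMul_pow (hK' : e0 ᵥ* K = lam • e0) (k : ℕ) :
    e0 ᵥ* K ^ k = (lam ^ k) • e0 := by
  induction k with
  | zero => simp [Matrix.vecMul_one]
  | succ k ih =>
    rw [pow_succ, ← Matrix.vecMul_vecMul, ih, Matrix.smul_vecMul, hK', smul_smul, pow_succ,
      mul_comm]

lemma entry00_eq (M : Matrix (Fin n) (Fin n) ℝ) : M 0 0 = e0 ⬝ᵥ (M *ᵥ e0) := by
  simp [e0, Matrix.mulVec_single, single_dotProduct]

lemma sandwich00 (hK : K *ᵥ e0 = lam • e0) (hK' : e0 ᵥ* K = lam • e0)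
    (V : Matrix (Fin n) (Fin n) ℝ) (hV : V 0 0 = 0) (j i : ℕ) :
    (K ^ j * V * K ^ i) 0 0 = 0 := by
  rw [entry00_eq (K ^ j * V * K ^ i), ← Matrix.mulVec_mulVec, ← Matrix.mulVec_mulVec,
    pow_mulVec_e0 K lam hK i, Matrix.mulVec_smul, Matrix.mulVec_smul, dotProduct_smul,
    dotProduct_mulVec, e0_vecMul_pow K lam hK' j, smul_dotProduct]
  rw [← entry00_eq V, hV]
  simp

lemma entry00_pow (hK : K *ᵥ e0 = lam • e0) (k : ℕ) : (K ^ k) 0 0 = lam ^ k := by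
  rw [entry00_eq (K ^ k), pow_mulVec_e0 K lam hK, dotProduct_smul]
  simp [e0, single_dotProduct, Pi.single_apply]
end EIG

section KEY

attribute [local instance] Matrix.linftyOpNormedAddCommGroup Matrix.linftyOpNormedRing
  Matrix.linftyOpNormedAlgebra Matrix.linfty_opNormOneClass

lemma abs_entry_le_norm (M : Matrix (Fin n) (Fin n) ℝ) (i j : Fin n) : |M i j| ≤ ‖M‖ := by
  rw [Matrix.linfty_opNorm_def]
  have h1 : ‖M i j‖₊ ≤ ∑ k, ‖M i k‖₊ :=
    Finset.single_le_sum (f := fun k => ‖M i k‖₊) (by simp) (Finset.mem_univ j)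
  have h2 : (∑ k, ‖M i k‖₊) ≤ Finset.univ.sup (fun i => ∑ k, ‖M i k‖₊) :=
    Finset.le_sup (f := fun i => ∑ k, ‖M i k‖₊) (Finset.mem_univ i)
  calc |M i j| = ((‖M i j‖₊ : NNReal) : ℝ) := by
        rw [coe_nnnorm, Real.norm_eq_abs]
    _ ≤ _ := by exact_mod_cast h1.trans h2

lemma norm_le_of_rows (M : Matrix (Fin n) (Fin n) ℝ) (c : ℝ)
    (h : ∀ i, ∑ j, |M i j| ≤ c) : ‖M‖ ≤ c := by
  have hc : 0 ≤ c := le_trans (Finset.sum_nonneg fun j _ => abs_nonneg _) (h 0)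
  have key : (univ.sup fun i => ∑ j, ‖M i j‖₊) ≤ (⟨c, hc⟩ : NNReal) := by
    apply Finset.sup_le
    intro i _
    refine NNReal.coe_le_coe.mp ?_
    push_cast
    exact le_of_le_of_eq (by simpa [Real.norm_eq_abs] using h i) (NNReal.coe_mk c hc).symm
  rw [Matrix.linfty_opNorm_def]
  exact_mod_cast key

lemma norm_pow_le_gen (a : Matrix (Fin n) (Fin n) ℝ) (c : ℝ) (h : ‖a‖ ≤ c) (k : ℕ) :
    ‖a ^ k‖ ≤ c ^ k := by
  induction k with
  | zero => simp
  | succ k ih =>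
    rw [pow_succ, pow_succ]
    exact le_trans (norm_mul_le _ _)
      (mul_le_mul ih h (norm_nonneg _) (pow_nonneg (le_trans (norm_nonneg a) h) k))



lemma factorial_aux (k : ℕ) (c : ℝ) (hc : 0 ≤ c) :
    (((k+2).factorial : ℝ))⁻¹ * (((k+2) : ℝ) * ((k+2):ℝ) * c) ≤ 2 * (c / (k.factorial : ℝ)) := by
  have hf : ((k+2).factorial : ℝ) = ((k+2) : ℝ) * ((k+1) : ℝ) * (k.factorial : ℝ) := by
    rw [show k + 2 = (k+1) + 1 from rfl, Nat.factorial_succ, Nat.factorial_succ]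
    push_cast
    ring
  have hkf : (0:ℝ) < (k.factorial : ℝ) := by exact_mod_cast k.factorial_pos
  rw [hf, mul_inv, mul_inv, div_eq_mul_inv]
  have h1 : (((k+2):ℝ))⁻¹ * ((k+1):ℝ)⁻¹ * ((k.factorial:ℝ))⁻¹ * (((k+2) : ℝ) * ((k+2):ℝ) * c)
      = (((k+2):ℝ) / ((k+1):ℝ)) * (c * ((k.factorial:ℝ))⁻¹) := by
    field_simp
  rw [h1]
  have h2 : (((k+2):ℝ) / ((k+1):ℝ)) ≤ 2 := by
    rw [div_le_iff₀ (by positivity)]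
    push_cast
    linarith
  have h3 : 0 ≤ c * ((k.factorial:ℝ))⁻¹ := by positivity
  nlinarith

set_option maxHeartbeats 2000000 in
lemma key_bound (K V : Matrix (Fin n) (Fin n) ℝ) (lam : ℝ)
    (hK : K *ᵥ e0 = lam • e0) (hK' : e0 ᵥ* K = lam • e0) (hV : V 0 0 = 0) :
    |(exp (K + V)) 0 0 - Real.exp lam| ≤ 6 * Real.exp (‖K‖ + ‖V‖) * ‖V‖ ^ 2 := by
  set N : ℝ := ‖K‖ + ‖V‖ with hNdef
  have hN : 0 ≤ N := by positivity
  have hKN : ‖K‖ ≤ N := by simp [hNdef, norm_nonneg]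
  have hKVN : ‖K + V‖ ≤ N := norm_add_le _ _
  -- the entry continuous linear map
  let Elin : Matrix (Fin n) (Fin n) ℝ →ₗ[ℝ] ℝ :=
    { toFun := fun M => M 0 0, map_add' := fun _ _ => rfl, map_smul' := fun _ _ => rfl }
  let E : Matrix (Fin n) (Fin n) ℝ →L[ℝ] ℝ := LinearMap.toContinuousLinearMap Elin
  have hsum1 : Summable (fun k => ((k.factorial : ℝ))⁻¹ • (K+V)^k) := expSeries_summable' _
  have hA : exp (K + V) 0 0 = ∑' k : ℕ, ((k.factorial:ℝ))⁻¹ * (((K+V)^k) 0 0) := by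
    have h := E.map_tsum hsum1
    have hE : ∀ M : Matrix (Fin n) (Fin n) ℝ, E M = M 0 0 := fun _ => rfl
    rw [exp_eq_tsum (𝕂 := ℝ)]
    calc (∑' k : ℕ, ((k.factorial:ℝ))⁻¹ • (K+V)^k) 0 0
        = E (∑' k : ℕ, ((k.factorial:ℝ))⁻¹ • (K+V)^k) := (hE _).symm
      _ = ∑' k : ℕ, E (((k.factorial:ℝ))⁻¹ • (K+V)^k) := h
      _ = ∑' k : ℕ, ((k.factorial:ℝ))⁻¹ * (((K+V)^k) 0 0) := by
          refine tsum_congr fun k => ?_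
          rw [_root_.map_smul, smul_eq_mul, hE]
  have hB : Real.exp lam = ∑' k : ℕ, ((k.factorial:ℝ))⁻¹ * lam^k := by
    rw [Real.exp_eq_exp_ℝ, exp_eq_tsum (𝕂 := ℝ)]
    simp [smul_eq_mul]
  have hsumg1 : Summable (fun k : ℕ => ((k.factorial:ℝ))⁻¹ * (((K+V)^k) 0 0)) := by
    have h2 := hsum1.map Elin.toAddMonoidHom E.continuous
    have h3 : (fun k : ℕ => ((k.factorial:ℝ))⁻¹ * (((K+V)^k) 0 0))
        = fun k : ℕ => Elin.toAddMonoidHom (((k.factorial:ℝ))⁻¹ • (K+V)^k) := by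
      funext k
      simp [Elin, smul_eq_mul]
      exact Or.inl rfl
    rw [h3]
    exact h2
  have hsumg2 : Summable (fun k : ℕ => ((k.factorial:ℝ))⁻¹ * lam^k) := by
    simpa [smul_eq_mul] using expSeries_summable' (𝕂 := ℝ) lam
  set f : ℕ → ℝ := fun k => ((k.factorial:ℝ))⁻¹ * (((K+V)^k) 0 0 - lam^k) with hfdef
  have hdiff : exp (K + V) 0 0 - Real.exp lam = ∑' k, f k := by
    rw [hA, hB, ← Summable.tsum_sub hsumg1 hsumg2]
    congr 1; funext k; simp [hfdef, mul_sub]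
  -- the bounding sequence
  set b : ℕ → ℝ := fun k => 2 * ‖V‖^2 * (N^(k-2) / ((k-2).factorial : ℝ)) with hbdef
  have hb0 : ∀ k, 0 ≤ b k := by intro k; positivity
  -- main termwise estimate
  have hfb : ∀ k, |f k| ≤ b k := by
    intro k
    match k with
    | 0 => simpa [hfdef] using hb0 0
    | 1 =>
      have h00 : (K + V) 0 0 = lam := by
        have : K 0 0 = lam := by
          have := entry00_pow K lam hK 1
          simpa using this
        simp [Matrix.add_apply, this, hV]
      simpa [hfdef, h00] using hb0 1
    | (k+2) =>
      set k' := k + 2 with hk'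
      -- telescoping once
      have htel : ((K+V)^k') 0 0 - lam^k'
          = ∑ j ∈ Finset.range k', (K^j * V * (K+V)^(k'-1-j)) 0 0 := by
        have h := pow_telescope K (K+V) k'
        rw [add_sub_cancel_left] at h
        have h2 : ((K+V)^k') 0 0 - (K^k') 0 0 = ((K+V)^k' - K^k') 0 0 := by
          simp [Matrix.sub_apply]
        rw [entry00_pow K lam hK k'] at h2
        rw [h2, h, Matrix.sum_apply]
      -- bound each summand
      have hterm : ∀ j ∈ Finset.range k',
          |(K^j * V * (K+V)^(k'-1-j)) 0 0| ≤ (k' : ℝ) * (N^(k'-2) * ‖V‖^2) := by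
        intro j hj
        rw [Finset.mem_range] at hj
        set m := k' - 1 - j with hm
        -- expand (K+V)^m
        have htel2 : (K+V)^m = K^m + ∑ i ∈ Finset.range m, K^i * V * (K+V)^(m-1-i) := by
          have h := pow_telescope K (K+V) m
          rw [add_sub_cancel_left, sub_eq_iff_eq_add] at h
          rw [h, add_comm]
        have hsplit : K^j * V * (K+V)^m
            = K^j * V * K^m + ∑ i ∈ Finset.range m, K^j * V * (K^i * V * (K+V)^(m-1-i)) := by
          rw [htel2, mul_add, Finset.mul_sum]
        rw [hsplit, Matrix.add_apply, sandwich00 K lam hK hK' V hV j m, zero_add,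
          Matrix.sum_apply]
        calc |∑ i ∈ Finset.range m, (K^j * V * (K^i * V * (K+V)^(m-1-i))) 0 0|
            ≤ ∑ i ∈ Finset.range m, |(K^j * V * (K^i * V * (K+V)^(m-1-i))) 0 0| :=
              Finset.abs_sum_le_sum_abs _ _
          _ ≤ ∑ i ∈ Finset.range m, N^(k'-2) * ‖V‖^2 := by
              apply Finset.sum_le_sum
              intro i hi
              rw [Finset.mem_range] at hi
              have hb1 : |(K^j * V * (K^i * V * (K+V)^(m-1-i))) 0 0|
                  ≤ ‖K^j * V * (K^i * V * (K+V)^(m-1-i))‖ := abs_entry_le_norm _ _ _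
              have hb2 : ‖K^j * V * (K^i * V * (K+V)^(m-1-i))‖
                  ≤ N^j * ‖V‖ * (N^i * ‖V‖ * N^(m-1-i)) := by
                calc ‖K^j * V * (K^i * V * (K+V)^(m-1-i))‖
                    ≤ ‖K^j * V‖ * ‖K^i * V * (K+V)^(m-1-i)‖ := norm_mul_le _ _
                  _ ≤ (‖K^j‖ * ‖V‖) * (‖K^i * V‖ * ‖(K+V)^(m-1-i)‖) := by
                      apply mul_le_mul (norm_mul_le _ _) (norm_mul_le _ _)
                        (norm_nonneg _) (by positivity)
                  _ ≤ (N^j * ‖V‖) * ((N^i * ‖V‖) * N^(m-1-i)) := by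
                      apply mul_le_mul
                      · exact mul_le_mul_of_nonneg_right (norm_pow_le_gen K N hKN j)
                          (norm_nonneg _)
                      · apply mul_le_mul
                        · exact le_trans (norm_mul_le _ _)
                            (mul_le_mul_of_nonneg_right (norm_pow_le_gen K N hKN i)
                              (norm_nonneg _))
                        · exact norm_pow_le_gen (K+V) N hKVN _
                        · exact norm_nonneg _
                        · positivity
                      · positivity
                      · positivity
                  _ = N^j * ‖V‖ * (N^i * ‖V‖ * N^(m-1-i)) := by ring
              have hexp : N^j * ‖V‖ * (N^i * ‖V‖ * N^(m-1-i)) = N^(k'-2) * ‖V‖^2 := by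
                have hjm : j + (i + (m-1-i)) = k' - 2 := by omega
                rw [← hjm, pow_add, pow_add]
                ring
              rw [← hexp]
              exact hb1.trans hb2
          _ = (m : ℝ) * (N^(k'-2) * ‖V‖^2) := by
              rw [Finset.sum_const, Finset.card_range, nsmul_eq_mul]
          _ ≤ (k' : ℝ) * (N^(k'-2) * ‖V‖^2) := by
              apply mul_le_mul_of_nonneg_right _ (by positivity)
              exact_mod_cast Nat.le_of_lt (by omega)
      -- assemble over j
      have hsum : |((K+V)^k') 0 0 - lam^k'| ≤ (k':ℝ) * ((k':ℝ) * (N^(k'-2) * ‖V‖^2)) := by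
        rw [htel]
        calc |∑ j ∈ Finset.range k', (K^j * V * (K+V)^(k'-1-j)) 0 0|
            ≤ ∑ j ∈ Finset.range k', |(K^j * V * (K+V)^(k'-1-j)) 0 0| :=
              Finset.abs_sum_le_sum_abs _ _
          _ ≤ ∑ _j ∈ Finset.range k', (k':ℝ) * (N^(k'-2) * ‖V‖^2) :=
              Finset.sum_le_sum hterm
          _ = (k':ℝ) * ((k':ℝ) * (N^(k'-2) * ‖V‖^2)) := by
              rw [Finset.sum_const, Finset.card_range, nsmul_eq_mul]
      have habs : |f k'| ≤ ((k'.factorial : ℝ))⁻¹ * ((k':ℝ) * ((k':ℝ) * (N^(k'-2) * ‖V‖^2))) := by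
        rw [hfdef]
        simp only [abs_mul]
        have : |((k'.factorial:ℝ))⁻¹| = ((k'.factorial:ℝ))⁻¹ := by
          rw [abs_of_nonneg]; positivity
        rw [this]
        exact mul_le_mul_of_nonneg_left hsum (by positivity)
      refine habs.trans ?_
      have := factorial_aux k (N^(k'-2) * ‖V‖^2) (by positivity)
      calc ((k'.factorial : ℝ))⁻¹ * ((k':ℝ) * ((k':ℝ) * (N^(k'-2) * ‖V‖^2)))
          = (((k+2).factorial : ℝ))⁻¹ * (((k+2):ℝ) * ((k+2):ℝ) * (N^(k'-2) * ‖V‖^2)) := by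
            rw [hk']; push_cast; ring
        _ ≤ 2 * ((N^(k'-2) * ‖V‖^2) / (k.factorial : ℝ)) := this
        _ = b k' := by
            rw [hbdef, hk']
            simp only [Nat.add_sub_cancel]
            ring
  -- summability of the bound sequence
  have hg : Summable (fun k : ℕ => N^k / (k.factorial : ℝ)) := Real.summable_pow_div_factorial N
  have hh : Summable (fun k : ℕ => N^(k-2) / ((k-2).factorial : ℝ)) := by
    refine (summable_nat_add_iff 2).mp ?_
    simpa only [Nat.add_sub_cancel] using hg
  have hsumb : Summable b := by rw [hbdef]; exact hh.mul_left _
  have h1sum : Summable (fun k : ℕ => N^(k+1-2) / ((k+1-2).factorial : ℝ)) :=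
    (summable_nat_add_iff 1).mpr hh
  have htsum_h : (∑' k : ℕ, N^(k-2)/((k-2).factorial:ℝ)) ≤ 3 * Real.exp N := by
    rw [Summable.tsum_eq_zero_add hh, Summable.tsum_eq_zero_add h1sum]
    have hfun : (fun k : ℕ => N^(k+1+1-2)/(((k+1+1-2).factorial : ℕ) : ℝ))
        = fun k : ℕ => N^k/((k.factorial : ℕ) : ℝ) := by
      funext k
      have h : k+1+1-2 = k := by omega
      rw [h]
    rw [hfun]
    have hexpN : (∑' k : ℕ, N^k/((k.factorial : ℕ):ℝ)) = Real.exp N := by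
      rw [Real.exp_eq_exp_ℝ, exp_eq_tsum_div]
    rw [hexpN]
    have h1 : (1:ℝ) ≤ Real.exp N := Real.one_le_exp hN
    norm_num
    linarith
  rw [hdiff]
  have habsf : ∀ k, ‖f k‖ ≤ b k := fun k => by rw [Real.norm_eq_abs]; exact hfb k
  have hbound := tsum_of_norm_bounded hsumb.hasSum habsf
  calc |∑' k, f k| ≤ ∑' k, b k := by rw [← Real.norm_eq_abs]; exact hbound
    _ = 2*‖V‖^2 * ∑' k : ℕ, N^(k-2)/((k-2).factorial:ℝ) := by rw [hbdef, tsum_mul_left]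
    _ ≤ 2*‖V‖^2 * (3*Real.exp N) := mul_le_mul_of_nonneg_left htsum_h (by positivity)
    _ = 6 * Real.exp N * ‖V‖^2 := by ring



-- ### Decomposition of a matrix into e0-block-diagonal and off parts

/-- The part of `A` supported on row 0 and column 0, off the diagonal. -/
noncomputable def Voff {n : ℕ} [NeZero n] (A : Matrix (Fin n) (Fin n) ℝ) :
    Matrix (Fin n) (Fin n) ℝ :=
  Matrix.of fun i j => if (i = 0 ∧ j ≠ 0) ∨ (i ≠ 0 ∧ j = 0) then A i j else 0

lemma Voff00 (A : Matrix (Fin n) (Fin n) ℝ) : Voff A 0 0 = 0 := by simp [Voff]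

lemma mulVec_e0_apply (M : Matrix (Fin n) (Fin n) ℝ) (i : Fin n) : (M *ᵥ e0) i = M i 0 := by
  rw [e0, Matrix.mulVec_single]
  simp

lemma vecMul_e0_apply (M : Matrix (Fin n) (Fin n) ℝ) (j : Fin n) : (e0 ᵥ* M) j = M 0 j := by
  rw [e0, Matrix.single_vecMul]
  simp

lemma Kpart_mulVec (A : Matrix (Fin n) (Fin n) ℝ) :
    (A - Voff A) *ᵥ e0 = (A 0 0) • e0 := by
  funext i
  rw [mulVec_e0_apply]
  by_cases hi : i = 0
  · subst hi
    simp [Matrix.sub_apply, Voff00, e0, Pi.single_apply]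
  · simp [Matrix.sub_apply, Voff, hi, e0, Pi.single_apply]

lemma Kpart_vecMul (A : Matrix (Fin n) (Fin n) ℝ) :
    e0 ᵥ* (A - Voff A) = (A 0 0) • e0 := by
  funext j
  rw [vecMul_e0_apply]
  by_cases hj : j = 0
  · subst hj
    simp [Matrix.sub_apply, Voff00, e0, Pi.single_apply]
  · simp [Matrix.sub_apply, Voff, hj, e0, Pi.single_apply]

lemma vecMul_smul_mat (c : ℝ) (M : Matrix (Fin n) (Fin n) ℝ) (v : Fin n → ℝ) :
    v ᵥ* (c • M) = c • (v ᵥ* M) := by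
  funext j
  simp [Matrix.vecMul, dotProduct, Finset.mul_sum, mul_left_comm]

-- ### Norm bounds for the pieces

lemma Voff_norm_le (H A : Matrix (Fin n) (Fin n) ℝ)
    (habs : ∀ i j, |A i j| = |H i j|) (hsym : ∀ j, |H 0 j| = |H j 0|) :
    ‖Voff A‖ ≤ ∑ j, (if j = 0 then 0 else |H j 0|) := by
  apply norm_le_of_rows
  intro i
  by_cases hi : i = 0
  · subst hi
    apply le_of_eq
    apply Finset.sum_congr rfl
    intro j _
    by_cases hj : j = 0
    · subst hj
      simp [Voff]
    · have h1 : |Voff A 0 j| = |H 0 j| := by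
        rw [show Voff A 0 j = A 0 j by simp [Voff, hj]]
        exact habs 0 j
      rw [h1, hsym j, if_neg hj]
  · have hrow : ∀ j : Fin n, |Voff A i j| = (if j = 0 then |H i 0| else 0) := by
      intro j
      by_cases hj : j = 0
      · subst hj
        rw [show Voff A i 0 = A i 0 by simp [Voff, hi], if_pos rfl]
        exact habs i 0
      · simp [Voff, hi, hj]
    calc ∑ j : Fin n, |Voff A i j| = ∑ j : Fin n, (if j = 0 then |H i 0| else 0) :=
          Finset.sum_congr rfl fun j _ => hrow j
      _ = |H i 0| := by simp
      _ ≤ ∑ j : Fin n, (if j = 0 then 0 else |H j 0|) := by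
          have h2 := Finset.single_le_sum (f := fun j : Fin n => if j = 0 then 0 else |H j 0|)
            (fun j _ => by positivity) (Finset.mem_univ i)
          simp only [if_neg hi] at h2
          exact h2

lemma Kpart_norm_le (A : Matrix (Fin n) (Fin n) ℝ) (R : ℝ) (hA : ∀ i j, |A i j| ≤ R) :
    ‖A - Voff A‖ ≤ (n : ℝ) * R := by
  apply norm_le_of_rows
  intro i
  calc ∑ j, |(A - Voff A) i j| ≤ ∑ j, R := by
        apply Finset.sum_le_sum
        intro j _
        have : |(A - Voff A) i j| ≤ |A i j| := by
          rw [Matrix.sub_apply]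
          by_cases h : (i = 0 ∧ j ≠ 0) ∨ (i ≠ 0 ∧ j = 0)
          · simp [Voff, h]
          · simp [Voff, h]
        exact this.trans (hA i j)
    _ = (n : ℝ) * R := by simp [mul_comm]

lemma Voff_norm_le' (A : Matrix (Fin n) (Fin n) ℝ) (R : ℝ) (hR : 0 ≤ R)
    (hA : ∀ i j, |A i j| ≤ R) : ‖Voff A‖ ≤ (n : ℝ) * R := by
  apply norm_le_of_rows
  intro i
  calc ∑ j, |Voff A i j| ≤ ∑ j, R := by
        apply Finset.sum_le_sum
        intro j _
        by_cases h : (i = 0 ∧ j ≠ 0) ∨ (i ≠ 0 ∧ j = 0)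
        · simpa [Voff, h] using hA i j
        · simpa [Voff, h] using hR
    _ = (n : ℝ) * R := by simp [mul_comm]

-- ### Facts about the bosonic form

lemma bosonic_apply (H : Matrix (Fin n) (Fin n) ℝ) (i j : Fin n) :
    bosonic H i j = if i ≠ j ∧ 0 < H i j then -H i j else H i j := by
  simp only [bosonic, Hminus, Matrix.sub_apply, Hplus, Matrix.of_apply]
  split <;> ring

lemma bosonic_abs (H : Matrix (Fin n) (Fin n) ℝ) (i j : Fin n) :
    |bosonic H i j| = |H i j| := by
  rw [bosonic_apply]
  split
  · exact abs_neg _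
  · rfl

lemma bosonic_00 (H : Matrix (Fin n) (Fin n) ℝ) : bosonic H 0 0 = H 0 0 := by
  rw [bosonic_apply]
  simp

-- ### The key bound, applied to the scaled matrices

lemma apply_key (β : ℝ) (hβ : 0 < β) (R : ℝ) (A H : Matrix (Fin n) (Fin n) ℝ)
    (habs : ∀ i j, |A i j| = |H i j|) (hA00 : A 0 0 = H 0 0)
    (hsym : ∀ j, |H 0 j| = |H j 0|) (hbd : ∀ i j, |H i j| ≤ R) :
    |exp ((-β) • A) 0 0 - Real.exp (-β * H 0 0)|
      ≤ 6 * Real.exp (2*β*((n:ℝ)*R)) * β^2 * (∑ j : Fin n, if j = 0 then 0 else |H j 0|)^2 := by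
  have hR0 : 0 ≤ R := (abs_nonneg _).trans (hbd 0 0)
  have hAbd : ∀ i j, |A i j| ≤ R := fun i j => (habs i j).le.trans (hbd i j)
  set K : Matrix (Fin n) (Fin n) ℝ := (-β) • (A - Voff A) with hKd
  set V : Matrix (Fin n) (Fin n) ℝ := (-β) • Voff A with hVd
  have hKV : K + V = (-β) • A := by rw [hKd, hVd, ← smul_add, sub_add_cancel]
  have hK : K *ᵥ e0 = (-β * H 0 0) • e0 := by
    rw [hKd, smul_mulVec, Kpart_mulVec, smul_smul, hA00]
  have hK' : e0 ᵥ* K = (-β * H 0 0) • e0 := by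
    rw [hKd, vecMul_smul_mat, Kpart_vecMul, smul_smul, hA00]
  have hV0 : V 0 0 = 0 := by
    rw [hVd, Matrix.smul_apply, Voff00, smul_zero]
  have key := key_bound K V (-β * H 0 0) hK hK' hV0
  rw [hKV] at key
  have hnorm_smul : ∀ M : Matrix (Fin n) (Fin n) ℝ, ‖(-β) • M‖ = β * ‖M‖ := by
    intro M
    rw [norm_smul, Real.norm_eq_abs, abs_neg, abs_of_pos hβ]
  set S : ℝ := ∑ j : Fin n, (if j = 0 then 0 else |H j 0|) with hSd
  have hS0 : 0 ≤ S := Finset.sum_nonneg fun j _ => by positivity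
  have hKn : ‖K‖ ≤ β * ((n:ℝ) * R) := by
    rw [hKd, hnorm_smul]
    exact mul_le_mul_of_nonneg_left (Kpart_norm_le A R hAbd) hβ.le
  have hVn : ‖V‖ ≤ β * S := by
    rw [hVd, hnorm_smul]
    exact mul_le_mul_of_nonneg_left (Voff_norm_le H A habs hsym) hβ.le
  have hVn' : ‖V‖ ≤ β * ((n:ℝ) * R) := by
    rw [hVd, hnorm_smul]
    exact mul_le_mul_of_nonneg_left (Voff_norm_le' A R hR0 hAbd) hβ.le
  refine key.trans ?_
  have hexp : Real.exp (‖K‖ + ‖V‖) ≤ Real.exp (2*β*((n:ℝ)*R)) := by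
    apply Real.exp_le_exp.mpr
    calc ‖K‖ + ‖V‖ ≤ β * ((n:ℝ)*R) + β * ((n:ℝ)*R) := add_le_add hKn hVn'
      _ = 2*β*((n:ℝ)*R) := by ring
  have hV2 : ‖V‖^2 ≤ β^2 * S^2 := by
    have := mul_self_le_mul_self (norm_nonneg V) hVn
    calc ‖V‖^2 = ‖V‖ * ‖V‖ := sq ‖V‖
      _ ≤ (β*S) * (β*S) := this
      _ = β^2 * S^2 := by ring
  calc 6 * Real.exp (‖K‖ + ‖V‖) * ‖V‖^2
      ≤ 6 * Real.exp (2*β*((n:ℝ)*R)) * (β^2 * S^2) := by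
        apply mul_le_mul
        · exact mul_le_mul_of_nonneg_left hexp (by norm_num)
        · exact hV2
        · positivity
        · positivity
    _ = 6 * Real.exp (2*β*((n:ℝ)*R)) * β^2 * S^2 := by ring

-- ### Positivity of the diagonal entry of exp of a symmetric matrix

lemma exp_entry_pos (A : Matrix (Fin n) (Fin n) ℝ) (hA : A.IsSymm) :
    0 < exp A 0 0 := by
  set M := exp ((1/2 : ℝ) • A) with hM
  set M' := exp ((-(1/2) : ℝ) • A) with hM'
  have hMM : exp A = M * M := by
    rw [hM, ← Matrix.exp_add_of_commute _ _ (Commute.refl ((1/2 : ℝ) • A)), ← add_smul]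
    norm_num
  have hcomm2 : Commute ((1/2 : ℝ) • A) ((-(1/2) : ℝ) • A) :=
    ((Commute.refl A).smul_left _).smul_right _
  have hMM' : M * M' = 1 := by
    rw [hM, hM', ← Matrix.exp_add_of_commute _ _ hcomm2, ← add_smul]
    norm_num
  have hMsymm : M.IsSymm := by
    rw [hM]
    exact Matrix.IsSymm.exp (hA.smul (1/2 : ℝ))
  have hsum1 : ∑ k, M 0 k * M' k 0 = 1 := by
    rw [← Matrix.mul_apply, hMM']
    exact Matrix.one_apply_eq 0
  have hex : ∃ k, M 0 k ≠ 0 := by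
    by_contra h
    push_neg at h
    rw [Finset.sum_eq_zero (fun k _ => by rw [h k, zero_mul])] at hsum1
    exact one_ne_zero hsum1.symm
  obtain ⟨k0, hk0⟩ := hex
  have hsymm_entry : ∀ k, M k 0 = M 0 k := fun k => hMsymm.apply 0 k
  rw [hMM, Matrix.mul_apply]
  apply Finset.sum_pos'
  · intro k _
    rw [hsymm_entry k]
    exact mul_self_nonneg _
  · exact ⟨k0, Finset.mem_univ _, by rw [hsymm_entry k0]; exact mul_self_pos.mpr hk0⟩

-- ### Uniform lower bound on the denominator by compactness

lemma exists_denom (β R : ℝ) (hβ : 0 < β) (hR : 0 < R) :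
    ∃ d : ℝ, 0 < d ∧ ∀ H : Matrix (Fin n) (Fin n) ℝ, H.IsSymm → (∀ i j, |H i j| ≤ R) →
      d ≤ exp ((-β) • H) 0 0 := by
  set T : Set (Matrix (Fin n) (Fin n) ℝ) := {H | H.IsSymm ∧ ∀ i j, |H i j| ≤ R} with hT
  have h0T : (0 : Matrix (Fin n) (Fin n) ℝ) ∈ T :=
    ⟨Matrix.isSymm_zero, fun i j => by simp [hR.le]⟩
  have hclosed : IsClosed T := by
    have h1 : IsClosed {H : Matrix (Fin n) (Fin n) ℝ | H.IsSymm} :=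
      isClosed_eq (continuous_id.matrix_transpose) continuous_id
    have h2 : IsClosed {H : Matrix (Fin n) (Fin n) ℝ | ∀ i j, |H i j| ≤ R} := by
      have heq : {H : Matrix (Fin n) (Fin n) ℝ | ∀ i j, |H i j| ≤ R}
          = ⋂ i, ⋂ j, {H : Matrix (Fin n) (Fin n) ℝ | |H i j| ≤ R} := by
        ext H
        simp [Set.mem_iInter]
      rw [heq]
      exact isClosed_iInter fun i => isClosed_iInter fun j =>
        isClosed_le (continuous_abs.comp (continuous_id.matrix_elem i j)) continuous_const
    exact h1.inter h2
  have hsub : T ⊆ Metric.closedBall 0 ((n:ℝ)*R) := by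
    intro H hH
    rw [Metric.mem_closedBall, dist_zero_right]
    apply norm_le_of_rows
    intro i
    calc ∑ j, |H i j| ≤ ∑ _j : Fin n, R := Finset.sum_le_sum fun j _ => hH.2 i j
      _ = (n:ℝ)*R := by simp [mul_comm]
  have hcpt : IsCompact T := Metric.isCompact_of_isClosed_isBounded hclosed
    (Metric.isBounded_closedBall.subset hsub)
  have hcont : Continuous fun H : Matrix (Fin n) (Fin n) ℝ => exp ((-β) • H) 0 0 :=
    (exp_continuous.comp (continuous_id.const_smul (-β) :
      Continuous fun H : Matrix (Fin n) (Fin n) ℝ => (-β) • H)).matrix_elem 0 0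
  obtain ⟨H0, hH0, hmin⟩ := hcpt.exists_isMinOn ⟨0, h0T⟩ hcont.continuousOn
  refine ⟨exp ((-β) • H0) 0 0, ?_, ?_⟩
  · exact exp_entry_pos _ (hH0.1.smul _)
  · intro H hsym hbd
    exact hmin ⟨hsym, hbd⟩

-- ### The main theorem, proved with the linfty operator norm instances in scope

theorem state_nsi_upper_bound_aux (β : ℝ) (hβ : 0 < β) (R : ℝ) (hR : 0 < R) :
    ∃ C : ℝ, 0 < C ∧
      ∀ H : Matrix (Fin n) (Fin n) ℝ, H.IsSymm → (∀ i j, |H i j| ≤ R) →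
        ((NormedSpace.exp (-β • bosonic H)) 0 0 - (NormedSpace.exp (-β • H)) 0 0) /
            (NormedSpace.exp (-β • H)) 0 0 ≤
          C * sqNorm (projPerp.mulVec (H.mulVec e0)) := by
  obtain ⟨d, hd, hdb⟩ := exists_denom (n := n) β R hβ hR
  have hnpos : (0:ℝ) < (n:ℝ) := by
    have := Nat.pos_of_ne_zero (NeZero.ne n)
    exact_mod_cast this
  set c1 : ℝ := 12 * Real.exp (2*β*((n:ℝ)*R)) * β^2 * (n:ℝ) with hc1
  have hc1pos : 0 < c1 := by positivity
  refine ⟨c1 / d, div_pos hc1pos hd, ?_⟩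
  intro H hsym hbd
  set x : Fin n → ℝ := projPerp.mulVec (H.mulVec e0) with hx
  have hxj : ∀ j, x j = if j = 0 then 0 else H j 0 := by
    intro j
    have hy : (H *ᵥ e0) = fun i => H i 0 := funext (mulVec_e0_apply H)
    rw [hx, projPerp, Matrix.sub_mulVec, Matrix.one_mulVec, Pi.sub_apply, hy]
    have h1 : (vecMulVec e0 e0 *ᵥ fun i => H i 0) j = e0 j * H 0 0 := by
      simp only [Matrix.mulVec, dotProduct, Matrix.vecMulVec_apply, mul_assoc]
      rw [← Finset.mul_sum]
      congr 1
      have : (∑ k, e0 k * H k 0) = e0 ⬝ᵥ (fun k => H k 0) := rfl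
      rw [this, e0, single_dotProduct, one_mul]
    rw [h1]
    by_cases hj : j = 0
    · subst hj
      simp [e0]
    · simp [e0, Pi.single_apply, hj]
  set s0 : ℝ := sqNorm x with hs0d
  have hs0 : 0 ≤ s0 := Finset.sum_nonneg fun i _ => sq_nonneg _
  set S : ℝ := ∑ j : Fin n, (if j = 0 then 0 else |H j 0|) with hSd
  have hSx : ∀ j : Fin n, (if j = 0 then 0 else |H j 0|) = |x j| := by
    intro j
    rw [hxj j]
    by_cases hj : j = 0 <;> simp [hj]
  have hS2 : S^2 ≤ (n:ℝ) * s0 := by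
    rw [hSd]
    calc (∑ j : Fin n, (if j = 0 then 0 else |H j 0|))^2
        = (∑ j : Fin n, |x j|)^2 := by rw [Finset.sum_congr rfl fun j _ => hSx j]
      _ ≤ ((Finset.univ : Finset (Fin n)).card : ℝ) * ∑ j : Fin n, |x j|^2 :=
          sq_sum_le_card_mul_sum_sq
      _ = (n:ℝ) * s0 := by
          rw [hs0d, sqNorm]
          congr 1
          · simp
          · exact Finset.sum_congr rfl fun j _ => sq_abs (x j)
  have hsymm' : ∀ j, |H 0 j| = |H j 0| := fun j => by rw [hsym.apply 0 j]
  have h1 := apply_key β hβ R (bosonic H) H (bosonic_abs H) (bosonic_00 H) hsymm' hbd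
  have h2 := apply_key β hβ R H H (fun i j => rfl) rfl hsymm' hbd
  have hden := hdb H hsym hbd
  have hdpos : (0:ℝ) < exp ((-β) • H) 0 0 := lt_of_lt_of_le hd hden
  rw [← hSd] at h1 h2
  set E : ℝ := Real.exp (2*β*((n:ℝ)*R)) with hE
  have hEpos : 0 < E := Real.exp_pos _
  have hnum : exp ((-β) • bosonic H) 0 0 - exp ((-β) • H) 0 0 ≤ c1 * s0 := by
    have e1 : exp ((-β) • bosonic H) 0 0 - Real.exp (-β * H 0 0) ≤ 6*E*β^2*S^2 :=
      (le_abs_self _).trans h1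
    obtain ⟨e2, _⟩ := abs_le.mp h2
    have e3 : exp ((-β) • bosonic H) 0 0 - exp ((-β) • H) 0 0 ≤ 12*E*β^2*S^2 := by
      linarith
    refine e3.trans ?_
    calc 12*E*β^2*S^2 ≤ 12*E*β^2*((n:ℝ)*s0) := by
          apply mul_le_mul_of_nonneg_left hS2 (by positivity)
      _ = c1 * s0 := by rw [hc1, hE]; ring
  calc (exp (-β • bosonic H) 0 0 - exp (-β • H) 0 0) / exp (-β • H) 0 0
      ≤ (c1 * s0) / d := div_le_div₀ (by positivity) hnum hd hden
    _ = (c1 / d) * s0 := by ring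

end KEY
end NSIProof
/-- **Theorem 2 (state-NSI upper bound).** For fixed dimension `n ≥ 1`, inverse temperature
`β > 0` and radius `R > 0`, there is a constant `C > 0` such that every real symmetric `H`
with `|Hᵢⱼ| ≤ R` satisfies
`S(H, e₀) = (⟨e₀|e^{-βH̃}|e₀⟩ - ⟨e₀|e^{-βH}|e₀⟩)/⟨e₀|e^{-βH}|e₀⟩ ≤ C ‖Π⊥ H e₀‖²`. -/
theorem state_nsi_upper_bound {n : ℕ} [NeZero n] (β : ℝ) (hβ : 0 < β) (R : ℝ) (hR : 0 < R) :
    ∃ C : ℝ, 0 < C ∧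
      ∀ H : Matrix (Fin n) (Fin n) ℝ, H.IsSymm → (∀ i j, |H i j| ≤ R) →
        ((NormedSpace.exp (-β • bosonic H)) 0 0 - (NormedSpace.exp (-β • H)) 0 0) /
            (NormedSpace.exp (-β • H)) 0 0 ≤
          C * sqNorm (projPerp.mulVec (H.mulVec e0)) := by
  exact state_nsi_upper_bound_aux β hβ R hR
end

section
/- Let H be an n×n real symmetric matrix with bosonic form H̃ = H₋ − H₊. For every β ≥ 0, Tr[exp(−βH̃)] ≥ Tr[exp(−βH)]; i.e., the non-stoquasticity indicator S(H) is nonnegative. -/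
open Matrix Filter

section Aux

open NormedSpace

attribute [local instance] Matrix.linftyOpNormedRing Matrix.linftyOpNormedAlgebra

variable {n : ℕ}

lemma abs_pow_entry_le {A B : Matrix (Fin n) (Fin n) ℝ} (h : ∀ i j, |A i j| ≤ B i j) :
    ∀ (k : ℕ) (i j), |(A ^ k) i j| ≤ (B ^ k) i j := by
  intro k
  induction k with
  | zero =>
    intro i j
    by_cases hij : i = j <;> simp [pow_zero, Matrix.one_apply, hij]
  | succ k ih =>
    intro i j
    rw [pow_succ, pow_succ, Matrix.mul_apply, Matrix.mul_apply]
    refine (Finset.abs_sum_le_sum_abs _ _).trans (Finset.sum_le_sum fun l _ => ?_)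
    rw [abs_mul]
    exact mul_le_mul (ih i l) (h l j) (abs_nonneg _) ((abs_nonneg _).trans (ih i l))

lemma trace_exp_le {A B : Matrix (Fin n) (Fin n) ℝ} (h : ∀ i j, |A i j| ≤ B i j) :
    (exp A).trace ≤ (exp B).trace := by
  classical
  let L : Matrix (Fin n) (Fin n) ℝ →L[ℝ] ℝ :=
    LinearMap.toContinuousLinearMap (Matrix.traceLinearMap (Fin n) ℝ ℝ)
  have key : ∀ M : Matrix (Fin n) (Fin n) ℝ,
      (exp M).trace = ∑' (k : ℕ), (Nat.factorial k : ℝ)⁻¹ * (M ^ k).trace := by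
    intro M
    have hs := expSeries_summable' (𝕂 := ℝ) M
    have := L.map_tsum (f := fun k : ℕ => (Nat.factorial k : ℝ)⁻¹ • M ^ k) hs
    rw [exp_eq_tsum ℝ]
    simpa [L, Matrix.trace_smul, smul_eq_mul] using this
  have hsum : ∀ M : Matrix (Fin n) (Fin n) ℝ,
      Summable (fun k : ℕ => (Nat.factorial k : ℝ)⁻¹ * (M ^ k).trace) := by
    intro M
    have hs := expSeries_summable' (𝕂 := ℝ) M
    have := hs.map L.toLinearMap.toAddMonoidHom L.continuous
    refine this.congr fun k => ?_
    simp [L, Matrix.trace_smul, smul_eq_mul]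
  have hk : ∀ k : ℕ, (Nat.factorial k : ℝ)⁻¹ * (A ^ k).trace ≤ (Nat.factorial k : ℝ)⁻¹ * (B ^ k).trace := by
    intro k
    refine mul_le_mul_of_nonneg_left ?_ (by positivity)
    refine Finset.sum_le_sum fun i _ => ?_
    exact (le_abs_self _).trans (abs_pow_entry_le h k i i)
  rw [key A, key B]
  exact Summable.tsum_le_tsum hk (hsum A) (hsum B)

lemma trace_exp_nonneg {A : Matrix (Fin n) (Fin n) ℝ} (hA : A.IsSymm) :
    0 ≤ (exp A).trace := by
  have h2 : A = (2:ℝ)⁻¹ • A + (2:ℝ)⁻¹ • A := by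
    rw [← add_smul]; norm_num
  rw [h2, Matrix.exp_add_of_commute _ _ (Commute.refl _)]
  set N := exp ((2 : ℝ)⁻¹ • A) with hNdef
  have ht : Nᵀ = N := by
    rw [hNdef, ← Matrix.exp_transpose]
    congr 1
    rw [Matrix.transpose_smul, hA]
  have hN : ∀ i j, N j i = N i j := fun i j => congrFun (congrFun ht i) j
  rw [Matrix.trace]
  refine Finset.sum_nonneg fun i _ => ?_
  rw [Matrix.diag_apply, Matrix.mul_apply]
  refine Finset.sum_nonneg fun j _ => ?_
  rw [hN i j]
  exact mul_self_nonneg _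

lemma exp_smul_one (c : ℝ) :
    exp (c • (1 : Matrix (Fin n) (Fin n) ℝ)) = Real.exp c • 1 := by
  rw [← Algebra.algebraMap_eq_smul_one]
  erw [← algebraMap_exp_comm (𝕂 := ℝ) (𝔸 := Matrix (Fin n) (Fin n) ℝ)]
  rw [Real.exp_eq_exp_ℝ, Algebra.algebraMap_eq_smul_one]

end Aux

/-- For a real symmetric matrix `H` with bosonic form `H̃ = H₋ - H₊` and any `β ≥ 0`,
`Tr e^{-βH̃} ≥ Tr e^{-βH}`; i.e. the non-stoquasticity indicator `S(H)` is nonnegative. -/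
theorem nsi_nonneg {n : ℕ} (H : Matrix (Fin n) (Fin n) ℝ) (hH : H.IsSymm)
    (β : ℝ) (hβ : 0 ≤ β) :
    (NormedSpace.exp (-β • H)).trace ≤ (NormedSpace.exp (-β • bosonic H)).trace ∧
    0 ≤ ((NormedSpace.exp (-β • bosonic H)).trace - (NormedSpace.exp (-β • H)).trace) /
        (NormedSpace.exp (-β • H)).trace := by
  classical
  set c : ℝ := β * ∑ i, |H i i| with hc
  -- entrywise facts about `bosonic H`
  have hbos_diag : ∀ i, bosonic H i i = H i i := by
    intro i
    simp [bosonic, Hminus, Hplus, Matrix.sub_apply]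
  have hbos_off : ∀ i j, i ≠ j → bosonic H i j = -|H i j| := by
    intro i j hij
    by_cases hpos : 0 < H i j
    · simp [bosonic, Hminus, Hplus, Matrix.sub_apply, hij, hpos, abs_of_pos hpos]
    · simp [bosonic, Hminus, Hplus, Matrix.sub_apply, hij, hpos,
        abs_of_nonpos (le_of_not_gt hpos)]
  -- the shifted matrices
  have hdom : ∀ i j, |(c • (1 : Matrix (Fin n) (Fin n) ℝ) + (-β) • H) i j|
      ≤ (c • (1 : Matrix (Fin n) (Fin n) ℝ) + (-β) • bosonic H) i j := by
    intro i j
    by_cases hij : i = j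
    · subst hij
      have h1 : H i i ≤ ∑ k, |H k k| :=
        (le_abs_self _).trans (Finset.single_le_sum (fun k _ => abs_nonneg (H k k))
          (Finset.mem_univ i))
      have h2 : 0 ≤ c - β * H i i := by
        rw [hc]
        nlinarith
      simp only [Matrix.add_apply, Matrix.smul_apply, Matrix.one_apply_eq, hbos_diag,
        smul_eq_mul, mul_one, neg_mul]
      rw [abs_of_nonneg]
      all_goals linarith [h2]
    · simp only [Matrix.add_apply, Matrix.smul_apply, Matrix.one_apply_ne hij, hbos_off i j hij,
        smul_eq_mul, mul_zero, zero_add, neg_mul, mul_neg, neg_neg]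
      rw [abs_neg, abs_mul, abs_of_nonneg hβ]
  have hmain := trace_exp_le hdom
  -- commutation and splitting off the scalar part
  have hcomm : ∀ M : Matrix (Fin n) (Fin n) ℝ,
      Commute (c • (1 : Matrix (Fin n) (Fin n) ℝ)) M := fun M =>
    (Commute.one_left M).smul_left c
  have hsplit : ∀ M : Matrix (Fin n) (Fin n) ℝ,
      (NormedSpace.exp (c • (1 : Matrix (Fin n) (Fin n) ℝ) + M)).trace
        = Real.exp c * (NormedSpace.exp M).trace := by
    intro M
    rw [Matrix.exp_add_of_commute _ _ (hcomm M), exp_smul_one, Matrix.smul_mul,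
      Matrix.one_mul, Matrix.trace_smul, smul_eq_mul]
  rw [hsplit, hsplit] at hmain
  have hepos : (0 : ℝ) < Real.exp c := Real.exp_pos c
  have h1 : (NormedSpace.exp (-β • H)).trace ≤ (NormedSpace.exp (-β • bosonic H)).trace :=
    le_of_mul_le_mul_left hmain hepos
  refine ⟨h1, div_nonneg (sub_nonneg.2 h1) ?_⟩
  have hsym : ((-β) • H).IsSymm := by
    rw [Matrix.IsSymm, Matrix.transpose_smul, hH]
  exact trace_exp_nonneg hsym
end

section
/- (Peierls inequality) Let M be an n×n real symmetric matrix. Then Tr[exp(M)] ≥ Σ_{i=1}^{n} exp(M_{ii}); i.e., the trace of the matrix exponential is at least the sum of the exponentials of the diagonal entries. In particular, for a real symmetric H and β > 0, Tr[exp(−βH)] ≥ exp(−β α) > 0 where α = max_i H_{ii}. -/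
open Matrix Filter

lemma peierls_aux {n : ℕ} (M : Matrix (Fin n) (Fin n) ℝ) (hM : M.IsSymm) :
    (∑ i, Real.exp (M i i)) ≤ (NormedSpace.exp M).trace := by
  have hH : M.IsHermitian := by
    rwa [Matrix.IsHermitian, conjTranspose_eq_transpose_of_trivial]
  set U : Matrix (Fin n) (Fin n) ℝ := (hH.eigenvectorUnitary : Matrix (Fin n) (Fin n) ℝ) with hU
  set lam : Fin n → ℝ := hH.eigenvalues with hlam
  have hU1 : U * star U = 1 := by
    simp only [hU]; simpa using hH.eigenvectorUnitary.2.2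
  have hU2 : star U * U = 1 := by
    simp only [hU]; simpa using hH.eigenvectorUnitary.2.1
  have hspec : M = U * Matrix.diagonal lam * star U := by
    have := hH.spectral_theorem
    simpa using this
  have hunit : IsUnit U := ⟨⟨U, star U, hU1, hU2⟩, rfl⟩
  have hinv : U⁻¹ = star U := Matrix.inv_eq_left_inv hU2
  -- trace of exp M
  have hexp : NormedSpace.exp M = U * NormedSpace.exp (Matrix.diagonal lam) * star U := by
    rw [hspec, ← hinv, Matrix.exp_conj _ _ hunit, hinv]
  have htrace : (NormedSpace.exp M).trace = ∑ k, Real.exp (lam k) := by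
    rw [hexp, Matrix.trace_mul_cycle, hU2, Matrix.one_mul,
      Matrix.exp_diagonal, Matrix.trace_diagonal]
    refine Finset.sum_congr rfl fun k _ => ?_
    rw [Pi.coe_exp, Real.exp_eq_exp_ℝ]
  -- diagonal entries
  have hdiag : ∀ i, M i i = ∑ k, (U i k)^2 • lam k := by
    intro i
    conv_lhs => rw [hspec]
    rw [Matrix.mul_apply]
    refine Finset.sum_congr rfl fun k _ => ?_
    simp [Matrix.mul_apply, Matrix.diagonal, Finset.sum_ite_eq, sq]
    ring
  have hrow : ∀ i, ∑ k, (U i k)^2 = 1 := by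
    intro i
    have := congrFun (congrFun hU1 i) i
    simpa [Matrix.mul_apply, Matrix.one_apply, sq] using this
  have hcol : ∀ k, ∑ i, (U i k)^2 = 1 := by
    intro k
    have := congrFun (congrFun hU2 k) k
    simpa [Matrix.mul_apply, Matrix.one_apply, sq] using this
  have jensen : ∀ i, Real.exp (M i i) ≤ ∑ k, (U i k)^2 * Real.exp (lam k) := by
    intro i
    rw [hdiag i]
    exact convexOn_exp.map_sum_le (fun k _ => sq_nonneg _) (hrow i)
      (fun k _ => Set.mem_univ _)
  calc (∑ i, Real.exp (M i i)) ≤ ∑ i, ∑ k, (U i k)^2 * Real.exp (lam k) :=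
        Finset.sum_le_sum fun i _ => jensen i
    _ = ∑ k, (∑ i, (U i k)^2) * Real.exp (lam k) := by
        rw [Finset.sum_comm]; simp [Finset.sum_mul]
    _ = ∑ k, Real.exp (lam k) := by simp [hcol]
    _ = (NormedSpace.exp M).trace := htrace.symm

/-- **Peierls inequality.** For a real symmetric matrix `M`,
`Tr[exp M] ≥ ∑ᵢ exp(Mᵢᵢ)`. In particular, for a real symmetric `H` and `β > 0`,
`Tr[exp(-βH)] ≥ exp(-βα) > 0` where `α = maxᵢ Hᵢᵢ`. -/
theorem peierls_inequality {n : ℕ} [NeZero n] (M : Matrix (Fin n) (Fin n) ℝ) (hM : M.IsSymm) :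
    (∑ i, Real.exp (M i i)) ≤ (NormedSpace.exp M).trace ∧
    ∀ (H : Matrix (Fin n) (Fin n) ℝ), H.IsSymm → ∀ β : ℝ, 0 < β →
      Real.exp (-β * alphaMax H) ≤ (NormedSpace.exp (-β • H)).trace ∧
      0 < (NormedSpace.exp (-β • H)).trace := by
  refine ⟨peierls_aux M hM, fun H hsymm β hβ => ?_⟩
  have hsymm' : (-β • H).IsSymm := by
    rw [Matrix.IsSymm] at hsymm ⊢
    rw [Matrix.transpose_smul, hsymm]
  have key := peierls_aux (-β • H) hsymm'
  obtain ⟨i₀, hi₀⟩ := Finite.exists_max (fun i => H i i)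
  have halpha : alphaMax H = H i₀ i₀ := by
    unfold alphaMax
    exact le_antisymm (ciSup_le hi₀)
      (le_ciSup (f := fun i => H i i) (Set.Finite.bddAbove (Set.finite_range _)) i₀)
  have h1 : Real.exp (-β * alphaMax H) ≤ ∑ i, Real.exp ((-β • H) i i) := by
    have : Real.exp (-β * alphaMax H) = Real.exp ((-β • H) i₀ i₀) := by
      rw [halpha]; simp [Matrix.smul_apply]
    rw [this]
    exact Finset.single_le_sum (f := fun i => Real.exp ((-β • H) i i)) (fun i _ => (Real.exp_pos _).le) (Finset.mem_univ i₀)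
  exact ⟨h1.trans key, lt_of_lt_of_le (Real.exp_pos _) (h1.trans key)⟩
end

section
/- Let A and B be arbitrary n×n real matrices. Then |Tr[exp(A + B)] − Tr[exp(A − B)]| ≤ 2·exp(‖A‖_{L1})·sinh(‖B‖_{L1}), where ‖M‖_{L1} := Σ_{i,j} |M_{ij}|. -/
set_option maxHeartbeats 1000000

open Matrix

lemma L1_nonneg {n : ℕ} (M : Matrix (Fin n) (Fin n) ℝ) : 0 ≤ L1 M := by
  unfold L1
  positivity

lemma abs_trace_le {n : ℕ} (M : Matrix (Fin n) (Fin n) ℝ) : |M.trace| ≤ L1 M := by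
  refine le_trans (Finset.abs_sum_le_sum_abs _ _) ?_
  refine Finset.sum_le_sum fun i _ => ?_
  exact Finset.single_le_sum (f := fun j => |M i j|) (fun j _ => abs_nonneg _)
    (Finset.mem_univ i)

lemma L1_add_le {n : ℕ} (M N : Matrix (Fin n) (Fin n) ℝ) : L1 (M + N) ≤ L1 M + L1 N := by
  unfold L1
  rw [← Finset.sum_add_distrib]
  refine Finset.sum_le_sum fun i _ => ?_
  rw [← Finset.sum_add_distrib]
  exact Finset.sum_le_sum fun j _ => abs_add_le _ _

lemma L1_mul_le {n : ℕ} (M N : Matrix (Fin n) (Fin n) ℝ) : L1 (M * N) ≤ L1 M * L1 N := by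
  have h1 : L1 (M * N) ≤ ∑ i, ∑ k, |M i k| * (∑ j, |N k j|) := by
    unfold L1
    refine Finset.sum_le_sum fun i _ => ?_
    calc ∑ j, |(M * N) i j| ≤ ∑ j, ∑ k, |M i k| * |N k j| := by
          refine Finset.sum_le_sum fun j _ => ?_
          simp only [Matrix.mul_apply]
          refine le_trans (Finset.abs_sum_le_sum_abs _ _) ?_
          refine le_of_eq (Finset.sum_congr rfl fun k _ => abs_mul _ _)
      _ = ∑ k, |M i k| * ∑ j, |N k j| := by
          rw [Finset.sum_comm]
          exact Finset.sum_congr rfl fun k _ => (Finset.mul_sum _ _ _).symm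
  refine h1.trans ?_
  unfold L1
  rw [Finset.sum_mul]
  refine Finset.sum_le_sum fun i _ => ?_
  rw [Finset.sum_mul]
  refine Finset.sum_le_sum fun k _ => ?_
  refine mul_le_mul_of_nonneg_left ?_ (abs_nonneg _)
  refine Finset.single_le_sum (f := fun k' => ∑ j, |N k' j|) (fun k' _ => ?_) (Finset.mem_univ k)
  positivity

lemma key_bound_s8 {n : ℕ} (A B : Matrix (Fin n) (Fin n) ℝ) (k : ℕ) :
    L1 ((A + B) ^ (k + 1) - (A - B) ^ (k + 1)) ≤ (L1 A + L1 B) ^ (k + 1) - (L1 A - L1 B) ^ (k + 1)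
    ∧ L1 ((A + B) ^ (k + 1) + (A - B) ^ (k + 1)) ≤
        (L1 A + L1 B) ^ (k + 1) + (L1 A - L1 B) ^ (k + 1) := by
  set a := L1 A with ha
  set b := L1 B with hb
  induction k with
  | zero =>
    constructor
    · have : (A + B) ^ 1 - (A - B) ^ 1 = B + B := by
        simp [pow_one]; try abel
      rw [this]
      calc L1 (B + B) ≤ b + b := L1_add_le B B
        _ ≤ (a + b) ^ 1 - (a - b) ^ 1 := by ring_nf; exact le_refl _
    · have : (A + B) ^ 1 + (A - B) ^ 1 = A + A := by
        simp [pow_one]; try abel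
      rw [this]
      calc L1 (A + A) ≤ a + a := L1_add_le A A
        _ ≤ (a + b) ^ 1 + (a - b) ^ 1 := by ring_nf; exact le_refl _
  | succ k ih =>
    obtain ⟨hd, hs⟩ := ih
    have ha0 : 0 ≤ a := L1_nonneg A
    have hb0 : 0 ≤ b := L1_nonneg B
    have hD0 : 0 ≤ L1 ((A + B) ^ (k + 1) - (A - B) ^ (k + 1)) := L1_nonneg _
    have hS0 : 0 ≤ L1 ((A + B) ^ (k + 1) + (A - B) ^ (k + 1)) := L1_nonneg _
    constructor
    · have hrw : (A + B) ^ (k + 2) - (A - B) ^ (k + 2) =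
          A * ((A + B) ^ (k + 1) - (A - B) ^ (k + 1)) +
          B * ((A + B) ^ (k + 1) + (A - B) ^ (k + 1)) := by
        have h1 : (A + B) ^ (k + 2) = (A + B) * (A + B) ^ (k + 1) := by rw [pow_succ']
        have h2 : (A - B) ^ (k + 2) = (A - B) * (A - B) ^ (k + 1) := by rw [pow_succ']
        rw [h1, h2]
        simp only [add_mul, sub_mul, mul_add, mul_sub]
        abel
      rw [hrw]
      calc L1 _ ≤ L1 (A * ((A + B) ^ (k + 1) - (A - B) ^ (k + 1))) +
            L1 (B * ((A + B) ^ (k + 1) + (A - B) ^ (k + 1))) := L1_add_le _ _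
        _ ≤ a * ((a + b) ^ (k + 1) - (a - b) ^ (k + 1)) +
            b * ((a + b) ^ (k + 1) + (a - b) ^ (k + 1)) := by
            refine add_le_add ?_ ?_
            · exact (L1_mul_le _ _).trans (mul_le_mul_of_nonneg_left hd ha0)
            · exact (L1_mul_le _ _).trans (mul_le_mul_of_nonneg_left hs hb0)
        _ = (a + b) ^ (k + 2) - (a - b) ^ (k + 2) := by ring
    · have hrw : (A + B) ^ (k + 2) + (A - B) ^ (k + 2) =
          A * ((A + B) ^ (k + 1) + (A - B) ^ (k + 1)) +
          B * ((A + B) ^ (k + 1) - (A - B) ^ (k + 1)) := by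
        have h1 : (A + B) ^ (k + 2) = (A + B) * (A + B) ^ (k + 1) := by rw [pow_succ']
        have h2 : (A - B) ^ (k + 2) = (A - B) * (A - B) ^ (k + 1) := by rw [pow_succ']
        rw [h1, h2]
        simp only [add_mul, sub_mul, mul_add, mul_sub]
        abel
      rw [hrw]
      calc L1 _ ≤ L1 (A * ((A + B) ^ (k + 1) + (A - B) ^ (k + 1))) +
            L1 (B * ((A + B) ^ (k + 1) - (A - B) ^ (k + 1))) := L1_add_le _ _
        _ ≤ a * ((a + b) ^ (k + 1) + (a - b) ^ (k + 1)) +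
            b * ((a + b) ^ (k + 1) - (a - b) ^ (k + 1)) := by
            refine add_le_add ?_ ?_
            · exact (L1_mul_le _ _).trans (mul_le_mul_of_nonneg_left hs ha0)
            · exact (L1_mul_le _ _).trans (mul_le_mul_of_nonneg_left hd hb0)
        _ = (a + b) ^ (k + 2) + (a - b) ^ (k + 2) := by ring

/-- For arbitrary real `n×n` matrices `A`, `B`,
`|Tr[exp(A+B)] - Tr[exp(A-B)]| ≤ 2 exp(‖A‖_{L1}) sinh(‖B‖_{L1})`. -/
theorem abs_trace_exp_sub_trace_exp_le {n : ℕ} (A B : Matrix (Fin n) (Fin n) ℝ) :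
    |(NormedSpace.exp (A + B)).trace - (NormedSpace.exp (A - B)).trace| ≤
      2 * Real.exp (L1 A) * Real.sinh (L1 B) := by
  letI : SeminormedRing (Matrix (Fin n) (Fin n) ℝ) := Matrix.linftyOpSemiNormedRing
  letI : NormedRing (Matrix (Fin n) (Fin n) ℝ) := Matrix.linftyOpNormedRing
  letI : NormedAlgebra ℝ (Matrix (Fin n) (Fin n) ℝ) := Matrix.linftyOpNormedAlgebra
  haveI : CompleteSpace (Matrix (Fin n) (Fin n) ℝ) := FiniteDimensional.complete ℝ _
  set a := L1 A with ha
  set b := L1 B with hb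
  have ha0 : 0 ≤ a := L1_nonneg A
  have hb0 : 0 ≤ b := L1_nonneg B
  -- the trace as a continuous linear map
  let T : Matrix (Fin n) (Fin n) ℝ →L[ℝ] ℝ :=
    LinearMap.toContinuousLinearMap (Matrix.traceLinearMap (Fin n) ℝ ℝ)
  have hT : ∀ M : Matrix (Fin n) (Fin n) ℝ, T M = M.trace := fun _ => rfl
  have hsum : ∀ X : Matrix (Fin n) (Fin n) ℝ,
      Summable fun k : ℕ => ((k.factorial : ℝ)⁻¹ • X ^ k) :=
    fun X => NormedSpace.expSeries_summable' (𝕂 := ℝ) X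
  have htr : ∀ X : Matrix (Fin n) (Fin n) ℝ,
      (NormedSpace.exp X).trace = ∑' k : ℕ, (k.factorial : ℝ)⁻¹ * (X ^ k).trace := by
    intro X
    rw [NormedSpace.exp_eq_tsum ℝ, ← hT, T.map_tsum (hsum X)]
    refine tsum_congr fun k => ?_
    rw [_root_.map_smul, hT, smul_eq_mul]
  -- summability of the trace series
  have hsumtr : ∀ X : Matrix (Fin n) (Fin n) ℝ,
      Summable fun k : ℕ => (k.factorial : ℝ)⁻¹ * (X ^ k).trace := by
    intro X
    have h := (hsum X).map T T.continuous
    refine h.congr fun k => ?_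
    simp only [Function.comp_apply, _root_.map_smul, hT, smul_eq_mul]
    rw [Matrix.trace_smul, smul_eq_mul]
  rw [htr (A + B), htr (A - B), ← Summable.tsum_sub (hsumtr (A + B)) (hsumtr (A - B))]
  have hterm : ∀ k : ℕ,
      |(k.factorial : ℝ)⁻¹ * ((A + B) ^ k).trace - (k.factorial : ℝ)⁻¹ * ((A - B) ^ k).trace| ≤
        (k.factorial : ℝ)⁻¹ * ((a + b) ^ k - (a - b) ^ k) := by
    intro k
    rw [← mul_sub, abs_mul, abs_of_nonneg (by positivity : (0:ℝ) ≤ (k.factorial : ℝ)⁻¹)]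
    refine mul_le_mul_of_nonneg_left ?_ (by positivity)
    cases k with
    | zero => simp
    | succ k =>
      have := (key_bound_s8 A B k).1
      calc |((A + B) ^ (k+1)).trace - ((A - B) ^ (k+1)).trace|
          = |((A + B) ^ (k+1) - (A - B) ^ (k+1)).trace| := by
            rw [Matrix.trace_sub]
        _ ≤ L1 ((A + B) ^ (k+1) - (A - B) ^ (k+1)) := abs_trace_le _
        _ ≤ (a + b) ^ (k+1) - (a - b) ^ (k+1) := this
  -- the bound series is summable
  have hsb1 : Summable fun k : ℕ => (k.factorial : ℝ)⁻¹ * (a + b) ^ k :=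
    (Real.summable_pow_div_factorial (a + b)).congr fun k => by
      rw [div_eq_mul_inv, mul_comm]
  have hsb2 : Summable fun k : ℕ => (k.factorial : ℝ)⁻¹ * (a - b) ^ k :=
    (Real.summable_pow_div_factorial (a - b)).congr fun k => by
      rw [div_eq_mul_inv, mul_comm]
  have hsb : Summable fun k : ℕ => (k.factorial : ℝ)⁻¹ * ((a + b) ^ k - (a - b) ^ k) := by
    simpa [mul_sub] using hsb1.sub hsb2
  have hf : Summable fun k : ℕ =>
      (k.factorial : ℝ)⁻¹ * ((A + B) ^ k).trace - (k.factorial : ℝ)⁻¹ * ((A - B) ^ k).trace :=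
    (hsumtr (A + B)).sub (hsumtr (A - B))
  have habs : Summable fun k : ℕ =>
      |(k.factorial : ℝ)⁻¹ * ((A + B) ^ k).trace - (k.factorial : ℝ)⁻¹ * ((A - B) ^ k).trace| := by
    refine Summable.of_nonneg_of_le (fun k => abs_nonneg _) hterm hsb
  calc |∑' k : ℕ, ((k.factorial : ℝ)⁻¹ * ((A + B) ^ k).trace - (k.factorial : ℝ)⁻¹ * ((A - B) ^ k).trace)|
      ≤ ∑' k : ℕ, |(k.factorial : ℝ)⁻¹ * ((A + B) ^ k).trace - (k.factorial : ℝ)⁻¹ * ((A - B) ^ k).trace| := by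
        have habs' : Summable fun k : ℕ =>
            ‖(k.factorial : ℝ)⁻¹ * ((A + B) ^ k).trace
              - (k.factorial : ℝ)⁻¹ * ((A - B) ^ k).trace‖ := by
          simpa only [Real.norm_eq_abs] using habs
        simpa only [Real.norm_eq_abs] using norm_tsum_le_tsum_norm habs'
    _ ≤ ∑' k : ℕ, (k.factorial : ℝ)⁻¹ * ((a + b) ^ k - (a - b) ^ k) :=
        Summable.tsum_le_tsum hterm habs hsb
    _ = Real.exp (a + b) - Real.exp (a - b) := by
        have hexp : ∀ x : ℝ, ∑' k : ℕ, (k.factorial : ℝ)⁻¹ * x ^ k = Real.exp x := by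
          intro x
          rw [Real.exp_eq_exp_ℝ, NormedSpace.exp_eq_tsum_div]
          exact tsum_congr fun k => by rw [div_eq_mul_inv, mul_comm]
        calc ∑' k : ℕ, (k.factorial : ℝ)⁻¹ * ((a + b) ^ k - (a - b) ^ k)
            = ∑' k : ℕ, ((k.factorial : ℝ)⁻¹ * (a + b) ^ k
                - (k.factorial : ℝ)⁻¹ * (a - b) ^ k) :=
              tsum_congr fun k => mul_sub _ _ _
          _ = (∑' k : ℕ, (k.factorial : ℝ)⁻¹ * (a + b) ^ k)
                - ∑' k : ℕ, (k.factorial : ℝ)⁻¹ * (a - b) ^ k := Summable.tsum_sub hsb1 hsb2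
          _ = Real.exp (a + b) - Real.exp (a - b) := by rw [hexp, hexp]
    _ = 2 * Real.exp a * Real.sinh b := by
        rw [Real.sinh_eq, Real.exp_add, Real.exp_sub, Real.exp_neg]
        have h := (Real.exp_pos b).ne'
        field_simp
end

section
/- (Imaginary-time evolution converges to the ground state) Let H be an n×n Hermitian (or real symmetric) matrix with smallest eigenvalue E₀, and let P₀ be the orthogonal projection onto the E₀-eigenspace of H. Let ψ be a vector with P₀ψ ≠ 0. Then, as τ → ∞, the normalized imaginary-time-evolved state exp(−τH)ψ / ‖exp(−τH)ψ‖ converges to P₀ψ / ‖P₀ψ‖. -/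
open Matrix Filter

private lemma matrix_ext_of_mulVec' {n : ℕ} {A B : Matrix (Fin n) (Fin n) ℂ}
    (h : ∀ v, A.mulVec v = B.mulVec v) : A = B := by
  ext i j
  have := congrFun (h (Pi.single j 1)) i
  simpa using this

/-- **Imaginary-time evolution converges to the ground state.** Let `H` be an `n×n` Hermitian
matrix with smallest eigenvalue `E₀` and let `P₀` be the orthogonal projection onto the
`E₀`-eigenspace (characterized as a Hermitian idempotent whose range lies in the eigenspace and
which fixes the eigenspace). If `P₀ψ ≠ 0`, then as `τ → ∞` the normalized
imaginary-time-evolved state `exp(-τH)ψ / ‖exp(-τH)ψ‖` converges (in Euclidean norm) to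
`P₀ψ / ‖P₀ψ‖`. -/
theorem imaginary_time_evolution_tendsto_ground_state {n : ℕ}
    (H : Matrix (Fin n) (Fin n) ℂ) (hH : H.IsHermitian)
    (E0 : ℝ)
    (hE0_le : ∀ i, E0 ≤ hH.eigenvalues i)
    (hE0_mem : ∃ i, hH.eigenvalues i = E0)
    (P0 : Matrix (Fin n) (Fin n) ℂ)
    (hP0herm : P0.IsHermitian)
    (hP0idem : P0 * P0 = P0)
    (hP0range : ∀ v : Fin n → ℂ, H.mulVec (P0.mulVec v) = (E0 : ℂ) • P0.mulVec v)
    (hP0fix : ∀ v : Fin n → ℂ, H.mulVec v = (E0 : ℂ) • v → P0.mulVec v = v)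
    (ψ : Fin n → ℂ) (hψ : P0.mulVec ψ ≠ 0) :
    Tendsto
      (fun τ : ℝ =>
        (‖(WithLp.equiv 2 (Fin n → ℂ)).symm ((NormedSpace.exp (-τ • H)).mulVec ψ)‖⁻¹ : ℝ) •
          (WithLp.equiv 2 (Fin n → ℂ)).symm ((NormedSpace.exp (-τ • H)).mulVec ψ))
      atTop
      (nhds ((‖(WithLp.equiv 2 (Fin n → ℂ)).symm (P0.mulVec ψ)‖⁻¹ : ℝ) •
          (WithLp.equiv 2 (Fin n → ℂ)).symm (P0.mulVec ψ))) := by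
  classical
  set U : Matrix (Fin n) (Fin n) ℂ := (hH.eigenvectorUnitary : Matrix (Fin n) (Fin n) ℂ)
    with hUdef
  set lam : Fin n → ℝ := hH.eigenvalues with hlamdef
  have hU1 : U * star U = 1 := Unitary.coe_mul_star_self _
  have hU2 : star U * U = 1 := Unitary.coe_star_mul_self _
  have hUinv : U⁻¹ = star U := Matrix.inv_eq_left_inv hU2
  have hUunit : IsUnit U := (Matrix.isUnit_iff_isUnit_det U).mpr (Matrix.isUnit_det_of_left_inverse hU2)
  have hspec : H = U * Matrix.diagonal (fun i => ((lam i : ℝ) : ℂ)) * star U :=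
    hH.spectral_theorem
  -- Step 1: exponential formula
  have hexp : ∀ τ : ℝ, NormedSpace.exp (-τ • H) =
      U * Matrix.diagonal (fun i => Complex.exp (-τ * lam i)) * star U := by
    intro τ
    have h1 : -τ • H = U * Matrix.diagonal (fun i => ((-τ * lam i : ℝ) : ℂ)) * U⁻¹ := by
      rw [hUinv]
      conv_lhs => rw [hspec]
      rw [← smul_mul_assoc, ← mul_smul_comm, ← Matrix.diagonal_smul]
      have harg : (-τ • (fun i => ((lam i : ℝ) : ℂ)) : Fin n → ℂ)
          = fun i => ((-τ * lam i : ℝ) : ℂ) := by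
        funext i
        show (-τ : ℝ) • ((lam i : ℝ) : ℂ) = ((-τ * lam i : ℝ) : ℂ)
        rw [Complex.real_smul]
        push_cast
        ring
      rw [harg]
    rw [h1, Matrix.exp_conj U _ hUunit, hUinv, Matrix.exp_diagonal]
    have he : (NormedSpace.exp fun i => ((-τ * lam i : ℝ) : ℂ))
        = fun i => Complex.exp (-τ * lam i) := by
      funext i
      rw [Pi.coe_exp, ← Complex.exp_eq_exp_ℂ]
      push_cast
      ring_nf
    rw [he]
  -- Step 2: scaled formula
  set d : ℝ → Fin n → ℂ := fun τ i => ((Real.exp (-(τ * (lam i - E0))) : ℝ) : ℂ) with hddef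
  have hscaled : ∀ τ : ℝ, ((Real.exp (τ * E0) : ℝ) : ℂ) • NormedSpace.exp (-τ • H)
      = U * Matrix.diagonal (d τ) * star U := by
    intro τ
    rw [hexp τ, ← smul_mul_assoc, ← mul_smul_comm, ← Matrix.diagonal_smul]
    have harg2 : (((Real.exp (τ * E0) : ℝ) : ℂ) • (fun i => Complex.exp (-τ * lam i))
        : Fin n → ℂ) = d τ := by
      funext i
      simp only [Pi.smul_apply, smul_eq_mul, hddef]
      rw [Complex.ofReal_exp, Complex.ofReal_exp, ← Complex.exp_add]
      congr 1
      push_cast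
      ring
    rw [harg2]
  -- Step 3: the limit projection
  set ind : Fin n → ℂ := fun i => if lam i = E0 then 1 else 0 with hinddef
  set Q : Matrix (Fin n) (Fin n) ℂ := U * Matrix.diagonal ind * star U with hQdef
  -- Q fixes eigenvectors of eigenvalue E0
  have hQfix : ∀ v : Fin n → ℂ, H.mulVec v = (E0 : ℂ) • v → Q.mulVec v = v := by
    intro v hv
    set w : Fin n → ℂ := (star U).mulVec v with hwdef
    have h1 : H.mulVec v
        = U.mulVec ((Matrix.diagonal (fun i => ((lam i : ℝ) : ℂ))).mulVec w) := by
      conv_lhs => rw [hspec]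
      rw [← Matrix.mulVec_mulVec, ← Matrix.mulVec_mulVec]
    have hw : (Matrix.diagonal (fun i => ((lam i : ℝ) : ℂ))).mulVec w
        = (E0 : ℂ) • w := by
      have h2 := h1.symm.trans hv
      have h3 := congrArg (fun x => (star U).mulVec x) h2
      simp only [Matrix.mulVec_mulVec, Matrix.mulVec_smul] at h3
      rwa [← mul_assoc, hU2, one_mul] at h3
    have hdw : (Matrix.diagonal ind).mulVec w = w := by
      funext i
      have hwi := congrFun hw i
      simp only [Matrix.mulVec_diagonal, Pi.smul_apply, smul_eq_mul] at hwi
      rw [Matrix.mulVec_diagonal]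
      by_cases hl : lam i = E0
      · simp [hinddef, hl]
      · have hzero : ((lam i : ℂ) - (E0 : ℂ)) * w i = 0 := by
          rw [sub_mul, hwi, sub_self]
        have hz : w i = 0 := by
          rcases mul_eq_zero.mp hzero with h | h
          · exact absurd (by exact_mod_cast sub_eq_zero.mp h) hl
          · exact h
        simp [hinddef, hl, hz]
    calc Q.mulVec v = U.mulVec ((Matrix.diagonal ind).mulVec w) := by
          rw [hQdef, ← Matrix.mulVec_mulVec, ← Matrix.mulVec_mulVec]
      _ = U.mulVec w := by rw [hdw]
      _ = v := by rw [hwdef, Matrix.mulVec_mulVec, hU1, Matrix.one_mulVec]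
  -- H Q = E0 Q
  have hHQ : H * Q = (E0 : ℂ) • Q := by
    have hdd : Matrix.diagonal (fun i => ((lam i : ℝ) : ℂ)) * Matrix.diagonal ind
        = (E0 : ℂ) • Matrix.diagonal ind := by
      have hfun : (fun i => ((lam i : ℝ) : ℂ) * ind i) = (E0 : ℂ) • ind := by
        funext i
        by_cases hl : lam i = E0
        · simp [hinddef, hl, smul_eq_mul]
        · simp [hinddef, hl]
      rw [Matrix.diagonal_mul_diagonal, hfun, Matrix.diagonal_smul]
    calc H * Q = U * (Matrix.diagonal (fun i => ((lam i : ℝ) : ℂ)) * (star U * U)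
          * Matrix.diagonal ind) * star U := by
          conv_lhs => rw [hspec, hQdef]
          noncomm_ring
      _ = U * ((E0 : ℂ) • Matrix.diagonal ind) * star U := by rw [hU2, mul_one, hdd]
      _ = (E0 : ℂ) • Q := by rw [hQdef, ← smul_mul_assoc, ← mul_smul_comm]
  have hQrange : ∀ v : Fin n → ℂ, H.mulVec (Q.mulVec v) = (E0 : ℂ) • Q.mulVec v := by
    intro v
    rw [Matrix.mulVec_mulVec, hHQ, Matrix.smul_mulVec]
  -- Q = P0
  have hPQ : P0 * Q = Q := matrix_ext_of_mulVec' fun v => by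
    rw [← Matrix.mulVec_mulVec]
    exact hP0fix _ (hQrange v)
  have hQP : Q * P0 = P0 := matrix_ext_of_mulVec' fun v => by
    rw [← Matrix.mulVec_mulVec]
    exact hQfix _ (hP0range v)
  have hindstar : star ind = ind := by
    funext i
    by_cases hl : lam i = E0 <;> simp [hinddef, hl]
  have hQherm : Q.conjTranspose = Q := by
    rw [hQdef]
    simp [Matrix.conjTranspose_mul, Matrix.diagonal_conjTranspose, hindstar,
      Matrix.star_eq_conjTranspose, mul_assoc]
  have hQeq : Q = P0 := by
    have h1 : Q * P0 = Q := by
      have := congrArg Matrix.conjTranspose hPQ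
      rwa [Matrix.conjTranspose_mul, hQherm, hP0herm.eq] at this
    rw [← hQP, h1]
  -- Step 4: convergence of the scaled evolution
  have hdiag : Tendsto (fun τ : ℝ => Matrix.diagonal (d τ)) atTop
      (nhds (Matrix.diagonal ind)) := by
    refine tendsto_pi_nhds.mpr ?_
    intro i
    rw [tendsto_pi_nhds]
    intro j
    by_cases hij : i = j
    · subst hij
      simp only [Matrix.diagonal_apply_eq]
      by_cases hl : lam i = E0
      · have hconst : (fun τ : ℝ => d τ i) = fun _ => (1 : ℂ) := by
          funext τ
          simp [hddef, hl]
        rw [hconst]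
        simpa [hinddef, hl] using
          (tendsto_const_nhds : Tendsto (fun _ : ℝ => (1 : ℂ)) atTop (nhds 1))
      · have hpos : 0 < lam i - E0 := sub_pos.mpr (lt_of_le_of_ne (hE0_le i) (Ne.symm hl))
        have h1 : Tendsto (fun τ : ℝ => -(τ * (lam i - E0))) atTop atBot := by
          apply Filter.tendsto_neg_atTop_atBot.comp
          exact Filter.Tendsto.atTop_mul_const hpos tendsto_id
        have h2 : Tendsto (fun τ : ℝ => Real.exp (-(τ * (lam i - E0)))) atTop (nhds 0) :=
          Real.tendsto_exp_atBot.comp h1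
        have h3 : Tendsto (fun τ : ℝ => d τ i) atTop (nhds ((0 : ℝ) : ℂ)) :=
          (Complex.continuous_ofReal.tendsto _).comp h2
        simpa [hinddef, hl] using h3
    · simpa [Matrix.diagonal_apply_ne _ hij] using
        (tendsto_const_nhds : Tendsto (fun _ : ℝ => (0 : ℂ)) atTop (nhds 0))
  have hcontM : Continuous fun M : Matrix (Fin n) (Fin n) ℂ => (U * M * star U).mulVec ψ :=
    Continuous.matrix_mulVec ((continuous_const.matrix_mul continuous_id).matrix_mul
      continuous_const) continuous_const
  have hmain : Tendsto
      (fun τ : ℝ => ((Real.exp (τ * E0) : ℝ) : ℂ) • (NormedSpace.exp (-τ • H)).mulVec ψ)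
      atTop (nhds (P0.mulVec ψ)) := by
    have h1 : Tendsto (fun τ : ℝ => (U * Matrix.diagonal (d τ) * star U).mulVec ψ) atTop
        (nhds ((U * Matrix.diagonal ind * star U).mulVec ψ)) :=
      (hcontM.tendsto _).comp hdiag
    have h2 : (fun τ : ℝ => ((Real.exp (τ * E0) : ℝ) : ℂ) •
        (NormedSpace.exp (-τ • H)).mulVec ψ)
        = fun τ : ℝ => (U * Matrix.diagonal (d τ) * star U).mulVec ψ := by
      funext τ
      rw [← Matrix.smul_mulVec, hscaled τ]
    rw [h2]
    have hq : (U * Matrix.diagonal ind * star U).mulVec ψ = P0.mulVec ψ := by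
      rw [← hQdef, hQeq]
    rwa [hq] at h1
  -- Step 5: conclude via continuity of normalization
  set e := (WithLp.equiv 2 (Fin n → ℂ)).symm with hedef
  set N : EuclideanSpace ℂ (Fin n) → EuclideanSpace ℂ (Fin n) := fun y => (‖y‖⁻¹ : ℝ) • y
    with hNdef
  have hcont_e : Continuous (e : (Fin n → ℂ) → EuclideanSpace ℂ (Fin n)) :=
    PiLp.continuous_toLp 2 (fun _ : Fin n => ℂ)
  have heP0 : e (P0.mulVec ψ) ≠ 0 := by
    intro h
    apply hψ
    have := congrArg (WithLp.equiv 2 (Fin n → ℂ)) h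
    simpa [hedef] using this
  have hcontN : ContinuousAt N (e (P0.mulVec ψ)) := by
    refine ContinuousAt.smul (f := fun y : EuclideanSpace ℂ (Fin n) => (‖y‖⁻¹ : ℝ)) (g := id) ?_ ?_
    · exact (continuous_norm.continuousAt).inv₀ (norm_ne_zero_iff.mpr heP0)
    · exact continuousAt_id
  have htend_e : Tendsto (fun τ : ℝ =>
      e (((Real.exp (τ * E0) : ℝ) : ℂ) • (NormedSpace.exp (-τ • H)).mulVec ψ))
      atTop (nhds (e (P0.mulVec ψ))) := (hcont_e.tendsto _).comp hmain
  have hfinal : Tendsto (fun τ : ℝ =>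
      N (e (((Real.exp (τ * E0) : ℝ) : ℂ) • (NormedSpace.exp (-τ • H)).mulVec ψ)))
      atTop (nhds (N (e (P0.mulVec ψ)))) := hcontN.tendsto.comp htend_e
  have hsame : ∀ τ : ℝ,
      N (e (((Real.exp (τ * E0) : ℝ) : ℂ) • (NormedSpace.exp (-τ • H)).mulVec ψ))
      = (‖e ((NormedSpace.exp (-τ • H)).mulVec ψ)‖⁻¹ : ℝ) •
          e ((NormedSpace.exp (-τ • H)).mulVec ψ) := by
    intro τ
    set x : EuclideanSpace ℂ (Fin n) := e ((NormedSpace.exp (-τ • H)).mulVec ψ) with hxdef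
    have hsm : e (((Real.exp (τ * E0) : ℝ) : ℂ) • (NormedSpace.exp (-τ • H)).mulVec ψ)
        = ((Real.exp (τ * E0) : ℝ) : ℂ) • x := by
      rw [hxdef, hedef]
      rfl
    rw [hsm, hNdef]
    have hc : (0 : ℝ) < Real.exp (τ * E0) := Real.exp_pos _
    have hnorm : ‖((Real.exp (τ * E0) : ℝ) : ℂ) • x‖ = Real.exp (τ * E0) * ‖x‖ := by
      rw [norm_smul, Complex.norm_real, Real.norm_eq_abs, abs_of_pos hc]
    simp only
    rw [hnorm]
    rcases eq_or_ne x 0 with hx0 | hx0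
    · simp [hx0]
    · have hnx : (0 : ℝ) < ‖x‖ := norm_pos_iff.mpr hx0
      rw [RCLike.real_smul_eq_coe_smul (K := ℂ), RCLike.real_smul_eq_coe_smul (K := ℂ) ‖x‖⁻¹,
        smul_smul]
      congr 1
      norm_cast
      field_simp
      have hr : (1 / (Real.exp (τ * E0) * ‖x‖)) * Real.exp (τ * E0) = 1 / ‖x‖ := by
        rw [one_div, one_div, _root_.mul_inv_rev, mul_assoc, inv_mul_cancel₀ hc.ne', mul_one]
      rw [← hr]
      exact (map_mul (algebraMap ℝ ℂ) _ _).symm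
  have hfun : (fun τ : ℝ =>
      (‖e ((NormedSpace.exp (-τ • H)).mulVec ψ)‖⁻¹ : ℝ) •
        e ((NormedSpace.exp (-τ • H)).mulVec ψ))
      = fun τ : ℝ =>
        N (e (((Real.exp (τ * E0) : ℝ) : ℂ) • (NormedSpace.exp (-τ • H)).mulVec ψ)) :=
    funext fun τ => (hsame τ).symm
  rw [hfun]
  exact hfinal
end
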